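/- arXiv:1508.01464 — 6 statements merged into one kernel-verified Lean document; each statement's English description precedes it below -/
import Mathlib

section
/- Let 0 ≤ ε ≤ 1/2, let f : {0,1}^n → {0,1} be boolean, let X be uniform on {0,1}^n and Y = X ⊕ Z where Z has i.i.d. Bernoulli(ε) coordinates independent of X. Let T be a random subset of {1,…,n} obtained by including each i independently with probability (1−2ε)². Then I(f(X);Y) ≤ E_T I(f(X); {X_i}_{i∈T}). Here I(f(X);Y) = H₂(E_x f) − E_y H₂((T_ε f)(y)), and I(f(X); {X_i}_{i∈T}) = H₂(E_x f) − E H₂(E(f|T)), the last expectation being over the values of the coordinates in T; equivalently I(f(X);{X_i}_{i∈T}) = Ent(f|T) + Ent((1−f)|T). -/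
open Finset

/-- The boolean cube `{0,1}^n`. -/
abbrev Cube (n : ℕ) := Fin n → Bool

/-- Expectation over a uniform point of the cube. -/
noncomputable def EX {n : ℕ} (f : Cube n → ℝ) : ℝ :=
  (∑ x : Cube n, f x) / (2 ^ n : ℝ)

/-- The entropy functional `Ent(f) = E f log₂ f - (E f) log₂ (E f)`. -/
noncomputable def Ent {n : ℕ} (f : Cube n → ℝ) : ℝ :=
  EX (fun x => f x * Real.logb 2 (f x)) - EX f * Real.logb 2 (EX f)

/-- The noise operator `T_ε`. -/
noncomputable def noiseOp {n : ℕ} (ε : ℝ) (f : Cube n → ℝ) : Cube n → ℝ :=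
  fun x => ∑ y : Cube n, ε ^ (hammingDist y x) * (1 - ε) ^ (n - hammingDist y x) * f y

/-- Binary entropy function (base 2). -/
noncomputable def H2 (x : ℝ) : ℝ :=
  -(x * Real.logb 2 x) - (1 - x) * Real.logb 2 (1 - x)

/-- The inverse of the binary entropy function, `H₂⁻¹ : [0,1] → [0,1/2]`. -/
noncomputable def H2inv (y : ℝ) : ℝ :=
  Function.invFunOn H2 (Set.Icc 0 (1 / 2)) y

/-- Mrs. Gerber's function `φ(x, ε)`. -/
noncomputable def phi (x ε : ℝ) : ℝ :=
  1 - H2 ((1 - 2 * ε) * H2inv (1 - x) + ε)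

/-- Conditional expectation of `f` given the coordinates in `A`,
viewed as a function on the cube depending only on coordinates in `A`. -/
noncomputable def condE {n : ℕ} (f : Cube n → ℝ) (A : Finset (Fin n)) : Cube n → ℝ :=
  fun x => (∑ z : Cube n, f (fun i => if i ∈ A then x i else z i)) / (2 ^ n : ℝ)

/-- `Ent(f | A) = Ent(E(f | A))`. -/
noncomputable def EntC {n : ℕ} (f : Cube n → ℝ) (A : Finset (Fin n)) : ℝ :=
  Ent (condE f A)

/-- Expectation over a random subset `T ⊆ [n]` obtained by including each element
independently with probability `l`. -/
noncomputable def ETsub {n : ℕ} (l : ℝ) (g : Finset (Fin n) → ℝ) : ℝ :=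
  ∑ T : Finset (Fin n), l ^ T.card * (1 - l) ^ (n - T.card) * g T


/-- Marginal of a distribution `p` on the cube on the coordinates in `T`
(as a function on the cube, depending only on the coordinates in `T`). -/
noncomputable def marg {n : ℕ} (p : Cube n → ℝ) (T : Finset (Fin n)) (x : Cube n) : ℝ :=
  ∑ y : Cube n, if ∀ i ∈ T, y i = x i then p y else 0

/-- Shannon entropy (base 2) of the marginal of `p` on the coordinates in `T`:
the sum goes over canonical representatives (coordinates outside `T` set to `false`). -/
noncomputable def margEnt {n : ℕ} (p : Cube n → ℝ) (T : Finset (Fin n)) : ℝ :=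
  -∑ x : Cube n,
      if ∀ i ∉ T, x i = false then marg p T x * Real.logb 2 (marg p T x) else 0

/-- Shannon entropy (base 2) of a probability distribution on the cube. -/
noncomputable def shEnt {n : ℕ} (p : Cube n → ℝ) : ℝ :=
  -∑ y : Cube n, p y * Real.logb 2 (p y)

/-- Walsh function `W_S(x) = (-1)^{∑_{i ∈ S} x_i}`. -/
def walsh {n : ℕ} (S : Finset (Fin n)) (x : Cube n) : ℝ :=
  ∏ i ∈ S, (if x i then (-1 : ℝ) else 1)

/-- Walsh–Fourier coefficient `f̂(S) = E_x f(x) W_S(x)`. -/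
noncomputable def fourierCoef {n : ℕ} (f : Cube n → ℝ) (S : Finset (Fin n)) : ℝ :=
  EX (fun x => f x * walsh S x)

/-- The noise operator `T_{ε,R}` acting only in the directions in `R`
(the composition of the directional noise operators `T_{ε,i}`, `i ∈ R`). -/
noncomputable def noiseOpOn {n : ℕ} (ε : ℝ) (R : Finset (Fin n)) (g : Cube n → ℝ) :
    Cube n → ℝ :=
  fun x => ∑ y : Cube n,
    (if ∀ i ∉ R, y i = x i then ∏ i ∈ R, (if y i = x i then 1 - ε else ε) else 0) * g y

/-- `I_g(A,m) = Ent(g | A ∪ {m}) - Ent(g | A) - Ent(g | {m})`. -/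
noncomputable def Ifun {n : ℕ} (g : Cube n → ℝ) (A : Finset (Fin n)) (m : Fin n) : ℝ :=
  EntC g (insert m A) - EntC g A - EntC g {m}

/-- `Z_{S;i,j}(f) = Ent(f|S∪{i,j}) - Ent(f|S∪{i}) - Ent(f|S∪{j}) + Ent(f|S)`. -/
noncomputable def Zfun {n : ℕ} (f : Cube n → ℝ) (S : Finset (Fin n)) (i j : Fin n) : ℝ :=
  EntC f (insert i (insert j S)) - EntC f (insert i S) - EntC f (insert j S) + EntC f S

/-- `Y(A,m,s)`: the average of `Z_{S;i,m}(f)` over subsets `S ⊆ A` with `|S| = s - 1`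
and over `i ∈ A \ S`. -/
noncomputable def Yavg {n : ℕ} (f : Cube n → ℝ) (A : Finset (Fin n)) (m : Fin n) (s : ℕ) : ℝ :=
  (∑ S ∈ A.powerset.filter (fun S => S.card = s - 1), ∑ i ∈ A \ S, Zfun f S i m) /
    (∑ S ∈ A.powerset.filter (fun S => S.card = s - 1), ((A \ S).card : ℝ))

/-- `Λ(k,s,λ) = 1 - ∑_{j=0}^{s-1} C(k,j) λ^j (1-λ)^{k-j}`. -/
noncomputable def Lam (k s : ℕ) (l : ℝ) : ℝ :=
  1 - ∑ j ∈ Finset.range s, (Nat.choose k j : ℝ) * l ^ j * (1 - l) ^ (k - j)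

/-- `t_s`: the average of `Z_{S;i,j}(f)` over subsets `S ⊆ [n]` with `|S| = s - 1`
and over distinct `i, j ∉ S`. -/
noncomputable def tAvg {n : ℕ} (f : Cube n → ℝ) (s : ℕ) : ℝ :=
  (∑ S ∈ (Finset.univ : Finset (Finset (Fin n))).filter (fun S => S.card = s - 1),
      ∑ i ∈ Sᶜ, ∑ j ∈ Sᶜ \ {i}, Zfun f S i j) /
    (∑ S ∈ (Finset.univ : Finset (Finset (Fin n))).filter (fun S => S.card = s - 1),
      ∑ i ∈ Sᶜ, ((Sᶜ \ {i}).card : ℝ))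

/-- The entropy functional on an arbitrary finite set with uniform measure. -/
noncomputable def entFin {α : Type*} [Fintype α] (g : α → ℝ) : ℝ :=
  (∑ a, g a * Real.logb 2 (g a)) / (Fintype.card α : ℝ) -
    ((∑ a, g a) / (Fintype.card α : ℝ)) * Real.logb 2 ((∑ a, g a) / (Fintype.card α : ℝ))



section SamorodnitskyAux

open Real

lemma hasSum_S (m u : ℝ) (hm : 0 < m) (hu : 0 ≤ u) (hum : u < m) :
    HasSum (fun j : ℕ => 2*m*((u/m)^(2*j+2))/((2*(j:ℝ)+1)*(2*(j:ℝ)+2)))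
      ((m+u)*Real.log (m+u) + (m-u)*Real.log (m-u) - 2*m*Real.log m) := by
  have hm0 : m ≠ 0 := ne_of_gt hm
  set v : ℝ := u / m with hv
  have hv0 : 0 ≤ v := div_nonneg hu hm.le
  have hv1 : v < 1 := (div_lt_one hm).mpr hum
  have hvm : m * v = u := by rw [hv]; field_simp
  clear_value v
  clear hv
  subst hvm
  have habs : |v| < 1 := abs_lt.mpr ⟨by linarith, hv1⟩
  have habs2 : |v ^ 2| < 1 := by
    rw [abs_pow]
    calc |v|^2 ≤ |v| := pow_le_of_le_one (abs_nonneg _) habs.le (by norm_num)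
    _ < 1 := habs
  have habsneg : |(-v)| < 1 := by rwa [abs_neg]
  have hA : HasSum (fun k : ℕ => v^(k+1)/((k:ℝ)+1)) (-Real.log (1-v)) :=
    Real.hasSum_pow_div_log_of_abs_lt_one habs
  have hB : HasSum (fun k : ℕ => (-v)^(k+1)/((k:ℝ)+1)) (-Real.log (1+v)) := by
    have := Real.hasSum_pow_div_log_of_abs_lt_one habsneg
    simpa [sub_neg_eq_add] using this
  have hC : HasSum (fun k : ℕ => (v^2)^(k+1)/((k:ℝ)+1)) (-Real.log (1-v^2)) :=
    Real.hasSum_pow_div_log_of_abs_lt_one habs2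
  have hAB : HasSum (fun k : ℕ => (v^(k+1)/((k:ℝ)+1) - (-v)^(k+1)/((k:ℝ)+1))/2)
      ((-Real.log (1-v) - -Real.log (1+v))/2) := (hA.sub hB).div_const 2
  have hOdd : HasSum (fun j : ℕ => v^(2*j+1)/(2*(j:ℝ)+1))
      ((-Real.log (1-v) - -Real.log (1+v))/2) := by
    have hinj : Function.Injective (fun j : ℕ => 2*j) :=
      fun a b h => mul_left_cancel₀ two_ne_zero h
    have hzero : ∀ k ∉ Set.range (fun j : ℕ => 2*j),
        (v^(k+1)/((k:ℝ)+1) - (-v)^(k+1)/((k:ℝ)+1))/2 = 0 := by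
      intro k hk
      have hodd : Odd k := by
        rcases Nat.even_or_odd k with he | ho
        · obtain ⟨r, hr⟩ := he
          exact absurd ⟨r, show 2*r = k by omega⟩ hk
        · exact ho
      obtain ⟨r, hr⟩ := hodd
      have hev : Even (k+1) := ⟨r+1, by omega⟩
      rw [hev.neg_pow]; ring
    have := (hinj.hasSum_iff hzero).mpr hAB
    convert this using 2 with j
    have hodd : Odd (2*j+1) := ⟨j, by ring⟩
    simp only [Function.comp]
    rw [hodd.neg_pow]
    push_cast
    ring
  have hcomb := (hOdd.mul_left (2*(m*v))).sub (hC.mul_left m)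
  have hterm : ∀ j : ℕ, 2*(m*v)*(v^(2*j+1)/(2*(j:ℝ)+1)) - m*((v^2)^(j+1)/((j:ℝ)+1))
      = 2*m*(v^(2*j+2))/((2*(j:ℝ)+1)*(2*(j:ℝ)+2)) := by
    intro j
    have h1 : (2*(j:ℝ)+1) ≠ 0 := by positivity
    have h2 : ((j:ℝ)+1) ≠ 0 := by positivity
    have h3 : (2*(j:ℝ)+2) ≠ 0 := by positivity
    have hvv : (v^2)^(j+1) = v^(2*j+2) := by rw [← pow_mul]; ring_nf
    rw [hvv]
    have hp : v^(2*j+2) = v^(2*j+1) * v := by ring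
    rw [hp]
    field_simp
    ring
  have hval : 2*(m*v)*((-Real.log (1-v) - -Real.log (1+v))/2) - m*(-Real.log (1-v^2))
      = (m+m*v)*Real.log (m+m*v) + (m-m*v)*Real.log (m-m*v) - 2*m*Real.log m := by
    have h1v : (0:ℝ) < 1 - v := by linarith
    have h1v' : (0:ℝ) < 1 + v := by linarith
    have hlv2 : Real.log (1-v^2) = Real.log (1-v) + Real.log (1+v) := by
      rw [← Real.log_mul (ne_of_gt h1v) (ne_of_gt h1v')]
      ring_nf
    have hmu : m + m*v = m * (1+v) := by ring
    have hmu' : m - m*v = m * (1-v) := by ring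
    rw [hlv2, hmu, hmu', Real.log_mul hm0 (ne_of_gt h1v'), Real.log_mul hm0 (ne_of_gt h1v)]
    ring
  rw [← hval]
  exact (funext hterm : _) ▸ hcomb

@[fun_prop]
lemma continuous_H2 : Continuous H2 := by
  have h : Continuous fun x : ℝ => x * Real.logb 2 x := by
    have := Real.continuous_mul_log.div_const (Real.log 2)
    convert this using 1
    funext x
    simp only [Real.logb]
    ring
  have h2 : Continuous fun x : ℝ => (1-x) * Real.logb 2 (1-x) :=
    h.comp (continuous_const.sub continuous_id)
  exact (h.neg).sub h2

private lemma H2_pair_eq (m w : ℝ) :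
    H2 (m - w) + H2 (m + w) = 2 * H2 m -
      (((m+w)*Real.log (m+w) + (m-w)*Real.log (m-w) - 2*m*Real.log m) +
       (((1-m)+w)*Real.log ((1-m)+w) + ((1-m)-w)*Real.log ((1-m)-w)
          - 2*(1-m)*Real.log (1-m))) / Real.log 2 := by
  have hl2 : Real.log 2 ≠ 0 := by
    have := Real.log_pos (by norm_num : (1:ℝ) < 2); linarith
  simp only [H2, Real.logb]
  rw [show (1:ℝ) - (m - w) = (1-m)+w by ring, show (1:ℝ) - (m + w) = (1-m)-w by ring]
  field_simp
  ring

lemma star_core (ε a b : ℝ) (hε0 : 0 ≤ ε) (hε1 : ε ≤ 1/2) (hab : a ≤ b)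
    (ha : 0 < a) (hb : b < 1) :
    (1-2*ε)^2 * ((H2 a + H2 b)/2) + (1-(1-2*ε)^2) * H2 ((a+b)/2)
      ≤ (H2 ((1-ε)*a+ε*b) + H2 (ε*a+(1-ε)*b))/2 := by
  have log2pos : (0:ℝ) < Real.log 2 := Real.log_pos (by norm_num)
  set ρ : ℝ := 1 - 2*ε with hρdef
  set m : ℝ := (a+b)/2 with hmdef
  set u : ℝ := (b-a)/2 with hudef
  have hρ0 : 0 ≤ ρ := by rw [hρdef]; linarith
  have hρ1 : ρ ≤ 1 := by rw [hρdef]; linarith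
  have hm0 : 0 < m := by rw [hmdef]; linarith
  have hm1 : 0 < 1 - m := by rw [hmdef]; linarith
  have hu0 : 0 ≤ u := by rw [hudef]; linarith
  have hum : u < m := by rw [hudef, hmdef]; linarith
  have hum' : u < 1 - m := by rw [hudef, hmdef]; linarith
  have hρu0 : 0 ≤ ρ * u := mul_nonneg hρ0 hu0
  have hρu : ρ * u ≤ u := by nlinarith
  have hρum : ρ * u < m := lt_of_le_of_lt hρu hum
  have hρum' : ρ * u < 1 - m := lt_of_le_of_lt hρu hum'
  -- the four HasSum facts
  have hS1 := hasSum_S m u hm0 hu0 hum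
  have hS2 := hasSum_S (1-m) u hm1 hu0 hum'
  have hS1ρ := hasSum_S m (ρ*u) hm0 hρu0 hρum
  have hS2ρ := hasSum_S (1-m) (ρ*u) hm1 hρu0 hρum'
  -- the key comparison
  have hterm : ∀ j : ℕ,
      2*m*((ρ*u/m)^(2*j+2))/((2*(j:ℝ)+1)*(2*(j:ℝ)+2)) +
      2*(1-m)*((ρ*u/(1-m))^(2*j+2))/((2*(j:ℝ)+1)*(2*(j:ℝ)+2))
      ≤ ρ^2 * (2*m*((u/m)^(2*j+2))/((2*(j:ℝ)+1)*(2*(j:ℝ)+2)) +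
      2*(1-m)*((u/(1-m))^(2*j+2))/((2*(j:ℝ)+1)*(2*(j:ℝ)+2))) := by
      intro j
      have hD : (0:ℝ) < (2*(j:ℝ)+1)*(2*(j:ℝ)+2) := by positivity
      have hpow : ρ^(2*j+2) ≤ ρ^2 := pow_le_pow_of_le_one hρ0 hρ1 (by omega)
      have e1 : (ρ*u/m)^(2*j+2) = ρ^(2*j+2) * (u/m)^(2*j+2) := by
        rw [mul_div_assoc, mul_pow]
      have e2 : (ρ*u/(1-m))^(2*j+2) = ρ^(2*j+2) * (u/(1-m))^(2*j+2) := by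
        rw [mul_div_assoc, mul_pow]
      have hx : (0:ℝ) ≤ 2*m*((u/m)^(2*j+2))/((2*(j:ℝ)+1)*(2*(j:ℝ)+2)) := by positivity
      have hy : (0:ℝ) ≤ 2*(1-m)*((u/(1-m))^(2*j+2))/((2*(j:ℝ)+1)*(2*(j:ℝ)+2)) := by
        positivity
      have l1 : 2*m*(ρ^(2*j+2) * (u/m)^(2*j+2))/((2*(j:ℝ)+1)*(2*(j:ℝ)+2))
          = ρ^(2*j+2) * (2*m*((u/m)^(2*j+2))/((2*(j:ℝ)+1)*(2*(j:ℝ)+2))) := by ring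
      have l2 : 2*(1-m)*(ρ^(2*j+2) * (u/(1-m))^(2*j+2))/((2*(j:ℝ)+1)*(2*(j:ℝ)+2))
          = ρ^(2*j+2) * (2*(1-m)*((u/(1-m))^(2*j+2))/((2*(j:ℝ)+1)*(2*(j:ℝ)+2))) := by ring
      rw [e1, e2, l1, l2]
      linarith [mul_le_mul_of_nonneg_right hpow hx, mul_le_mul_of_nonneg_right hpow hy]
  have key := hasSum_le hterm (hS1ρ.add hS2ρ) ((hS1.add hS2).mul_left (ρ^2))
  -- translate to H2
  have e1 : (1-ε)*a + ε*b = m - ρ*u := by rw [hmdef, hudef, hρdef]; ring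
  have e2 : ε*a + (1-ε)*b = m + ρ*u := by rw [hmdef, hudef, hρdef]; ring
  have e3 : a = m - u := by rw [hmdef, hudef]; ring
  have e4 : b = m + u := by rw [hmdef, hudef]; ring
  rw [e1, e2, e3, e4]
  have key2 : (((m+ρ*u)*Real.log (m+ρ*u) + (m-ρ*u)*Real.log (m-ρ*u) - 2*m*Real.log m) +
       (((1-m)+ρ*u)*Real.log ((1-m)+ρ*u) + ((1-m)-ρ*u)*Real.log ((1-m)-ρ*u)
          - 2*(1-m)*Real.log (1-m))) / Real.log 2
      ≤ ρ^2 * ((((m+u)*Real.log (m+u) + (m-u)*Real.log (m-u) - 2*m*Real.log m) +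
       (((1-m)+u)*Real.log ((1-m)+u) + ((1-m)-u)*Real.log ((1-m)-u)
          - 2*(1-m)*Real.log (1-m))) / Real.log 2) := by
    have h := (div_le_div_iff_of_pos_right log2pos).mpr key
    rwa [mul_div_assoc] at h
  -- finish with linarith
  have I1' : H2 (m - u) + H2 (m + u) = 2 * H2 m -
      (((m+u)*Real.log (m+u) + (m-u)*Real.log (m-u) - 2*m*Real.log m) +
       (((1-m)+u)*Real.log ((1-m)+u) + ((1-m)-u)*Real.log ((1-m)-u)
          - 2*(1-m)*Real.log (1-m))) / Real.log 2 := H2_pair_eq m u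
  have I2' : H2 (m - ρ*u) + H2 (m + ρ*u) = 2 * H2 m -
      (((m+ρ*u)*Real.log (m+ρ*u) + (m-ρ*u)*Real.log (m-ρ*u) - 2*m*Real.log m) +
       (((1-m)+ρ*u)*Real.log ((1-m)+ρ*u) + ((1-m)-ρ*u)*Real.log ((1-m)-ρ*u)
          - 2*(1-m)*Real.log (1-m))) / Real.log 2 := H2_pair_eq m (ρ*u)
  rw [show H2 (m-u) + H2 (m+u) = _ from I1', I2']
  linarith [key2]

lemma star_interior (ε a b : ℝ) (hε0 : 0 ≤ ε) (hε1 : ε ≤ 1/2)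
    (ha : a ∈ Set.Ioo (0:ℝ) 1) (hb : b ∈ Set.Ioo (0:ℝ) 1) :
    (1-2*ε)^2 * ((H2 a + H2 b)/2) + (1-(1-2*ε)^2) * H2 ((a+b)/2)
      ≤ (H2 ((1-ε)*a+ε*b) + H2 (ε*a+(1-ε)*b))/2 := by
  rcases le_total a b with hab | hab
  · exact star_core ε a b hε0 hε1 hab ha.1 hb.2
  · have h := star_core ε b a hε0 hε1 hab hb.1 ha.2
    have e1 : H2 ((1-ε)*b+ε*a) = H2 (ε*a+(1-ε)*b) := congrArg H2 (by ring)
    have e2 : H2 (ε*b+(1-ε)*a) = H2 ((1-ε)*a+ε*b) := congrArg H2 (by ring)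
    have e3 : H2 ((b+a)/2) = H2 ((a+b)/2) := congrArg H2 (by ring)
    rw [e1, e2, e3] at h
    linarith

lemma star (ε a b : ℝ) (hε0 : 0 ≤ ε) (hε1 : ε ≤ 1/2)
    (ha0 : 0 ≤ a) (ha1 : a ≤ 1) (hb0 : 0 ≤ b) (hb1 : b ≤ 1) :
    (1-2*ε)^2 * ((H2 a + H2 b)/2) + (1-(1-2*ε)^2) * H2 ((a+b)/2)
      ≤ (H2 ((1-ε)*a+ε*b) + H2 (ε*a+(1-ε)*b))/2 := by
  set Φ : ℝ × ℝ → ℝ := fun p =>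
    (H2 ((1-ε)*p.1+ε*p.2) + H2 (ε*p.1+(1-ε)*p.2))/2 -
      ((1-2*ε)^2 * ((H2 p.1 + H2 p.2)/2) + (1-(1-2*ε)^2) * H2 ((p.1+p.2)/2)) with hΦdef
  have hΦ : Continuous Φ := by
    apply Continuous.sub
    · exact ((continuous_H2.comp ((continuous_const.mul continuous_fst).add
        (continuous_const.mul continuous_snd))).add
        (continuous_H2.comp ((continuous_const.mul continuous_fst).add
        (continuous_const.mul continuous_snd)))).div_const 2
    · exact (continuous_const.mul (((continuous_H2.comp continuous_fst).add
        (continuous_H2.comp continuous_snd)).div_const 2)).add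
        (continuous_const.mul (continuous_H2.comp
          ((continuous_fst.add continuous_snd).div_const 2)))
  have hsub : Set.Ioo (0:ℝ) 1 ×ˢ Set.Ioo (0:ℝ) 1 ⊆ {p : ℝ × ℝ | 0 ≤ Φ p} := by
    rintro ⟨x, y⟩ ⟨hx, hy⟩
    have := star_interior ε x y hε0 hε1 hx hy
    simp only [hΦdef, Set.mem_setOf_eq]
    linarith
  have hclosed : IsClosed {p : ℝ × ℝ | 0 ≤ Φ p} := isClosed_le continuous_const hΦ
  have hcl := closure_minimal hsub hclosed
  rw [closure_prod_eq, closure_Ioo (by norm_num : (0:ℝ) ≠ 1)] at hcl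
  have hmem : ((a, b) : ℝ × ℝ) ∈ {p : ℝ × ℝ | 0 ≤ Φ p} :=
    hcl ⟨⟨ha0, ha1⟩, ⟨hb0, hb1⟩⟩
  simp only [hΦdef, Set.mem_setOf_eq] at hmem
  linarith

lemma sum_cube_succ {n : ℕ} (F : Cube (n+1) → ℝ) :
    ∑ x : Cube (n+1), F x
      = ∑ x : Cube n, (F (Fin.cons false x) + F (Fin.cons true x)) := by
  rw [← (Fin.consEquiv (fun _ : Fin (n+1) => Bool)).sum_comp F, Fintype.sum_prod_type,
    Fintype.sum_bool, ← Finset.sum_add_distrib]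
  apply Finset.sum_congr rfl
  intro x _
  simp [Fin.consEquiv, add_comm]

lemma hammingDist_eq_sum {n : ℕ} (u v : Cube n) :
    hammingDist u v = ∑ i, if u i = v i then 0 else 1 := by
  rw [hammingDist, Finset.card_eq_sum_ones, Finset.sum_filter]
  apply Finset.sum_congr rfl
  intro i _
  by_cases h : u i = v i <;> simp [h]

lemma hammingDist_cons {n : ℕ} (a b : Bool) (x y : Cube n) :
    hammingDist (Fin.cons a x : Cube (n+1)) (Fin.cons b y)
      = (if a = b then 0 else 1) + hammingDist x y := by
  rw [hammingDist_eq_sum, hammingDist_eq_sum, Fin.sum_univ_succ]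
  simp [Fin.cons_succ, Fin.cons_zero]

lemma hammingDist_le {n : ℕ} (x y : Cube n) : hammingDist x y ≤ n := by
  simpa using hammingDist_le_card_fintype (x := x) (y := y)

-- noiseOp splits
lemma noiseOp_cons {n : ℕ} (ε : ℝ) (f : Cube (n+1) → ℝ) (a : Bool) (y : Cube n) :
    noiseOp ε f (Fin.cons a y)
      = (1-ε) * noiseOp ε (fun x => f (Fin.cons a x)) y
        + ε * noiseOp ε (fun x => f (Fin.cons (!a) x)) y := by
  unfold noiseOp
  rw [sum_cube_succ (fun x => ε ^ (hammingDist x (Fin.cons a y)) *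
    (1-ε) ^ ((n+1) - hammingDist x (Fin.cons a y)) * f x)]
  rw [Finset.sum_add_distrib, Finset.mul_sum, Finset.mul_sum]
  have key : ∀ (b : Bool) (x : Cube n),
      ε ^ (hammingDist (Fin.cons b x : Cube (n+1)) (Fin.cons a y)) *
        (1-ε) ^ ((n+1) - hammingDist (Fin.cons b x : Cube (n+1)) (Fin.cons a y)) * f (Fin.cons b x)
      = (if b = a then (1-ε) else ε) *
          (ε ^ (hammingDist x y) * (1-ε) ^ (n - hammingDist x y) * f (Fin.cons b x)) := by
    intro b x
    rw [hammingDist_cons]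
    have hle := hammingDist_le x y
    by_cases hba : b = a
    · subst hba
      rw [if_pos rfl, if_pos rfl, zero_add]
      have h : n + 1 - hammingDist x y = (n - hammingDist x y) + 1 := by omega
      rw [h, pow_succ]
      ring
    · rw [if_neg hba, if_neg hba]
      have h : n + 1 - (1 + hammingDist x y) = n - hammingDist x y := by omega
      rw [h, add_comm 1 (hammingDist x y), pow_succ]
      ring
  cases a
  · rw [show (!false) = true from rfl]
    congr 1
    · exact Finset.sum_congr rfl (fun x _ => by rw [key false x, if_pos rfl])
    · exact Finset.sum_congr rfl (fun x _ => by
        rw [key true x, if_neg (by simp)])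
  · rw [show (!true) = false from rfl, add_comm]
    congr 1
    · exact Finset.sum_congr rfl (fun x _ => by rw [key true x, if_pos rfl])
    · exact Finset.sum_congr rfl (fun x _ => by
        rw [key false x, if_neg (by simp)])

lemma noiseOp_const_one {n : ℕ} (ε : ℝ) (y : Cube n) :
    noiseOp ε (fun _ => (1:ℝ)) y = 1 := by
  induction n with
  | zero =>
    unfold noiseOp
    rw [show (Finset.univ : Finset (Cube 0)) = {y} from Finset.univ_unique.trans (by
      congr 1; exact Subsingleton.elim _ _)]
    simp [hammingDist]
  | succ n ih =>
    have h := noiseOp_cons ε (fun _ => (1:ℝ)) (y 0) (Fin.tail y)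
    rw [Fin.cons_self_tail] at h
    rw [h, ih (Fin.tail y)]
    ring

lemma noiseOp_nonneg {n : ℕ} {ε : ℝ} (hε0 : 0 ≤ ε) (hε1 : ε ≤ 1/2)
    {f : Cube n → ℝ} (hf : ∀ x, 0 ≤ f x) (y : Cube n) : 0 ≤ noiseOp ε f y := by
  apply Finset.sum_nonneg
  intro x _
  have h1 : (0:ℝ) ≤ 1 - ε := by linarith
  exact mul_nonneg (mul_nonneg (pow_nonneg hε0 _) (pow_nonneg h1 _)) (hf x)

lemma noiseOp_le_one {n : ℕ} {ε : ℝ} (hε0 : 0 ≤ ε) (hε1 : ε ≤ 1/2)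
    {f : Cube n → ℝ} (hf : ∀ x, f x ≤ 1) (y : Cube n) : noiseOp ε f y ≤ 1 := by
  have h1 : (0:ℝ) ≤ 1 - ε := by linarith
  calc noiseOp ε f y ≤ noiseOp ε (fun _ => (1:ℝ)) y := by
        apply Finset.sum_le_sum
        intro x _
        have : (0:ℝ) ≤ ε ^ (hammingDist x y) * (1-ε) ^ (n - hammingDist x y) := by positivity
        calc ε ^ (hammingDist x y) * (1-ε) ^ (n - hammingDist x y) * f x
            ≤ ε ^ (hammingDist x y) * (1-ε) ^ (n - hammingDist x y) * 1 :=
              mul_le_mul_of_nonneg_left (hf x) this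
          _ = _ := by ring
    _ = 1 := noiseOp_const_one ε y

lemma noiseOp_avg {n : ℕ} (ε : ℝ) (g h : Cube n → ℝ) (y : Cube n) :
    noiseOp ε (fun x => (g x + h x)/2) y = (noiseOp ε g y + noiseOp ε h y)/2 := by
  unfold noiseOp
  rw [← Finset.sum_add_distrib, Finset.sum_div]
  apply Finset.sum_congr rfl
  intro x _
  ring

lemma EX_succ {n : ℕ} (F : Cube (n+1) → ℝ) :
    EX F = (EX (fun x => F (Fin.cons false x)) + EX (fun x => F (Fin.cons true x)))/2 := by
  unfold EX
  rw [sum_cube_succ F, Finset.sum_add_distrib, pow_succ]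
  have h2 : ((2:ℝ)^n) ≠ 0 := by positivity
  field_simp

lemma EX_mono {n : ℕ} {F G : Cube n → ℝ} (h : ∀ x, F x ≤ G x) : EX F ≤ EX G := by
  unfold EX
  have hs : ∑ x : Cube n, F x ≤ ∑ x : Cube n, G x := Finset.sum_le_sum fun x _ => h x
  have hp : (0:ℝ) < 2^n := by positivity
  gcongr

lemma condE_nonneg {n : ℕ} {f : Cube n → ℝ} (hf : ∀ x, 0 ≤ f x) (A : Finset (Fin n))
    (x : Cube n) : 0 ≤ condE f A x :=
  div_nonneg (Finset.sum_nonneg fun z _ => hf _) (by positivity)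

lemma condE_le_one {n : ℕ} {f : Cube n → ℝ} (hf : ∀ x, f x ≤ 1) (A : Finset (Fin n))
    (x : Cube n) : condE f A x ≤ 1 := by
  unfold condE
  rw [div_le_one (by positivity)]
  calc (∑ z : Cube n, f fun i => if i ∈ A then x i else z i) ≤ ∑ _z : Cube n, (1:ℝ) :=
        Finset.sum_le_sum (fun z _ => hf _)
    _ = 2^n := by simp [Finset.card_univ]

lemma condE_avg {n : ℕ} (g h : Cube n → ℝ) (A : Finset (Fin n)) (x : Cube n) :
    condE (fun z => (g z + h z)/2) A x = (condE g A x + condE h A x)/2 := by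
  unfold condE
  have e : (∑ z : Cube n, (g (fun i => if i ∈ A then x i else z i)
        + h (fun i => if i ∈ A then x i else z i))/2)
      = (∑ z : Cube n, (g (fun i => if i ∈ A then x i else z i)
        + h (fun i => if i ∈ A then x i else z i)))/2 := by
    rw [Finset.sum_div]
  rw [show (∑ z : Cube n, (fun z => (g z + h z)/2) fun i => if i ∈ A then x i else z i)
    = ∑ z : Cube n, (g (fun i => if i ∈ A then x i else z i)
        + h (fun i => if i ∈ A then x i else z i))/2 from rfl, e, Finset.sum_add_distrib]
  ring

lemma mem_map_succ {n : ℕ} (T : Finset (Fin n)) (j : Fin n) :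
    (j.succ ∈ T.map (Fin.succEmb n)) ↔ j ∈ T := by
  rw [Finset.mem_map]
  constructor
  · rintro ⟨k, hk, hkj⟩
    have : k = j := Fin.succ_injective n (by simpa [Fin.coe_succEmb] using hkj)
    rwa [← this]
  · intro hj
    exact ⟨j, hj, by simp [Fin.coe_succEmb]⟩

lemma zero_not_mem_map_succ {n : ℕ} (T : Finset (Fin n)) :
    (0 : Fin (n+1)) ∉ T.map (Fin.succEmb n) := by
  rw [Finset.mem_map]
  rintro ⟨k, _, hk⟩
  exact Fin.succ_ne_zero k (by simpa [Fin.coe_succEmb] using hk)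

lemma blend_cons_mem {n : ℕ} (T : Finset (Fin n)) (a c : Bool) (x z : Cube n) :
    (fun i => if i ∈ insert 0 (T.map (Fin.succEmb n)) then (Fin.cons a x : Cube (n+1)) i
        else (Fin.cons c z : Cube (n+1)) i)
      = (Fin.cons a (fun j => if j ∈ T then x j else z j) : Cube (n+1)) := by
  funext i
  refine Fin.cases ?_ ?_ i
  · rw [if_pos (Finset.mem_insert_self 0 _)]
    simp
  · intro j
    by_cases hj : j ∈ T
    · rw [if_pos (Finset.mem_insert_of_mem ((mem_map_succ T j).mpr hj))]
      simp [Fin.cons_succ, hj]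
    · rw [if_neg (fun hmem => by
        rcases Finset.mem_insert.mp hmem with h0 | hm
        · exact Fin.succ_ne_zero j h0
        · exact hj ((mem_map_succ T j).mp hm))]
      simp [Fin.cons_succ, hj]

lemma blend_cons_notmem {n : ℕ} (T : Finset (Fin n)) (a c : Bool) (x z : Cube n) :
    (fun i => if i ∈ T.map (Fin.succEmb n) then (Fin.cons a x : Cube (n+1)) i
        else (Fin.cons c z : Cube (n+1)) i)
      = (Fin.cons c (fun j => if j ∈ T then x j else z j) : Cube (n+1)) := by
  funext i
  refine Fin.cases ?_ ?_ i
  · rw [if_neg (zero_not_mem_map_succ T)]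
    simp
  · intro j
    by_cases hj : j ∈ T
    · rw [if_pos ((mem_map_succ T j).mpr hj)]
      simp [Fin.cons_succ, hj]
    · rw [if_neg (fun hm => hj ((mem_map_succ T j).mp hm))]
      simp [Fin.cons_succ, hj]

lemma condE_cons_mem {n : ℕ} (f : Cube (n+1) → ℝ) (T : Finset (Fin n)) (a : Bool)
    (x : Cube n) :
    condE f (insert 0 (T.map (Fin.succEmb n))) (Fin.cons a x)
      = condE (fun z => f (Fin.cons a z)) T x := by
  unfold condE
  rw [sum_cube_succ (fun z => f (fun i => if i ∈ insert 0 (T.map (Fin.succEmb n))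
    then (Fin.cons a x : Cube (n+1)) i else z i))]
  have e : ∀ c z, (fun i => if i ∈ insert 0 (T.map (Fin.succEmb n))
      then (Fin.cons a x : Cube (n+1)) i else (Fin.cons c z : Cube (n+1)) i)
      = (Fin.cons a (fun j => if j ∈ T then x j else z j) : Cube (n+1)) :=
    fun c z => blend_cons_mem T a c x z
  have e2 : ∀ z : Cube n,
      f (fun i => if i ∈ insert 0 (T.map (Fin.succEmb n))
        then (Fin.cons a x : Cube (n+1)) i else (Fin.cons false z : Cube (n+1)) i)
      + f (fun i => if i ∈ insert 0 (T.map (Fin.succEmb n))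
        then (Fin.cons a x : Cube (n+1)) i else (Fin.cons true z : Cube (n+1)) i)
      = 2 * f (Fin.cons a (fun j => if j ∈ T then x j else z j)) := by
    intro z
    rw [e false z, e true z]
    ring
  rw [Finset.sum_congr rfl (fun z _ => e2 z), ← Finset.mul_sum, pow_succ]
  have h2 : ((2:ℝ)^n) ≠ 0 := by positivity
  field_simp

lemma condE_cons_notmem {n : ℕ} (f : Cube (n+1) → ℝ) (T : Finset (Fin n)) (a : Bool)
    (x : Cube n) :
    condE f (T.map (Fin.succEmb n)) (Fin.cons a x)
      = (condE (fun z => f (Fin.cons false z)) T x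
          + condE (fun z => f (Fin.cons true z)) T x)/2 := by
  unfold condE
  rw [sum_cube_succ (fun z => f (fun i => if i ∈ T.map (Fin.succEmb n)
    then (Fin.cons a x : Cube (n+1)) i else z i))]
  have e2 : ∀ z : Cube n,
      f (fun i => if i ∈ T.map (Fin.succEmb n)
        then (Fin.cons a x : Cube (n+1)) i else (Fin.cons false z : Cube (n+1)) i)
      + f (fun i => if i ∈ T.map (Fin.succEmb n)
        then (Fin.cons a x : Cube (n+1)) i else (Fin.cons true z : Cube (n+1)) i)
      = f (Fin.cons false (fun j => if j ∈ T then x j else z j))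
        + f (Fin.cons true (fun j => if j ∈ T then x j else z j)) := by
    intro z
    rw [blend_cons_notmem T a false x z, blend_cons_notmem T a true x z]
  rw [Finset.sum_congr rfl (fun z _ => e2 z), Finset.sum_add_distrib, pow_succ]
  have h2 : ((2:ℝ)^n) ≠ 0 := by positivity
  field_simp

lemma sum_powerset_map {M : Type*} [AddCommMonoid M] {α β : Type*} [DecidableEq α]
    [DecidableEq β] (f : α ↪ β) (s : Finset α) (g : Finset β → M) :
    ∑ t ∈ (s.map f).powerset, g t = ∑ T ∈ s.powerset, g (T.map f) := by
  apply Finset.sum_nbij' (i := fun t => t.preimage f f.injective.injOn)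
    (j := fun T => T.map f)
  · intro t ht
    rw [Finset.mem_powerset] at ht ⊢
    intro a ha
    rw [Finset.mem_preimage] at ha
    rcases Finset.mem_map.mp (ht ha) with ⟨b, hb, hba⟩
    rwa [← f.injective hba]
  · intro T hT
    rw [Finset.mem_powerset] at *
    exact Finset.map_subset_map.mpr hT
  · intro t ht
    rw [Finset.mem_powerset] at ht
    obtain ⟨u, hu, rfl⟩ := Finset.subset_map_iff.mp ht
    rw [Finset.preimage_map]
  · intro T _
    rw [Finset.preimage_map]
  · intro t ht
    rw [Finset.mem_powerset] at ht
    obtain ⟨u, hu, rfl⟩ := Finset.subset_map_iff.mp ht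
    rw [Finset.preimage_map]

lemma sum_finset_succ {n : ℕ} (G : Finset (Fin (n+1)) → ℝ) :
    ∑ T : Finset (Fin (n+1)), G T
      = ∑ T : Finset (Fin n),
          (G (T.map (Fin.succEmb n)) + G (insert 0 (T.map (Fin.succEmb n)))) := by
  rw [← Finset.powerset_univ, Fin.univ_succ, Finset.cons_eq_insert,
    Finset.sum_powerset_insert (by simpa using zero_not_mem_map_succ Finset.univ)]
  rw [sum_powerset_map, sum_powerset_map, Finset.powerset_univ, ← Finset.sum_add_distrib]
  rfl

lemma EX_avg {n : ℕ} (F G : Cube n → ℝ) :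
    EX (fun x => (F x + G x)/2) = (EX F + EX G)/2 := by
  unfold EX
  rw [← Finset.sum_div, Finset.sum_add_distrib]
  ring

lemma EX_combo {n : ℕ} (c d : ℝ) (P Q R : Cube n → ℝ) :
    EX (fun y => c * P y + d * ((Q y + R y)/2))
      = c * EX P + d * ((EX Q + EX R)/2) := by
  unfold EX
  rw [Finset.sum_add_distrib, ← Finset.mul_sum, ← Finset.mul_sum, ← Finset.sum_div,
    Finset.sum_add_distrib]
  ring


lemma cube_zero_univ : (Finset.univ : Finset (Cube 0)) = {fun i => i.elim0} := by
  apply Finset.eq_univ_iff_forall.mpr ?_ |>.symm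
  intro y
  have : y = fun i => i.elim0 := funext fun i => i.elim0
  simp [this]

lemma finset_fin_zero_univ : (Finset.univ : Finset (Finset (Fin 0))) = {∅} := by
  apply Finset.eq_univ_iff_forall.mpr ?_ |>.symm
  intro T
  simp [Finset.eq_empty_of_isEmpty T]

theorem main_ind : ∀ (n : ℕ) (ε : ℝ), 0 ≤ ε → ε ≤ 1/2 → ∀ f : Cube n → ℝ,
    (∀ x, 0 ≤ f x) → (∀ x, f x ≤ 1) →
    ETsub ((1-2*ε)^2) (fun T => EX (fun x => H2 (condE f T x)))
      ≤ EX (fun y => H2 (noiseOp ε f y)) := by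
  intro n
  induction n with
  | zero =>
    intro ε hε0 hε1 f hf0 hf1
    unfold ETsub EX noiseOp condE
    rw [cube_zero_univ, finset_fin_zero_univ]
    simp only [Finset.sum_singleton, Finset.card_empty, pow_zero, one_mul, Nat.zero_sub,
      Finset.notMem_empty, if_false, hammingDist_self, mul_one, Nat.sub_zero]
    apply le_of_eq
    norm_num
  | succ n ih =>
    intro ε hε0 hε1 f hf0 hf1
    have hρ0 : (0:ℝ) ≤ 1-2*ε := by linarith
    have hl0 : (0:ℝ) ≤ (1-2*ε)^2 := sq_nonneg _
    have h1l : (0:ℝ) ≤ 1 - (1-2*ε)^2 := by nlinarith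
    -- component functions
    have hg00 : ∀ x : Cube n, 0 ≤ f (Fin.cons false x) := fun x => hf0 _
    have hg01 : ∀ x : Cube n, f (Fin.cons false x) ≤ 1 := fun x => hf1 _
    have hg10 : ∀ x : Cube n, 0 ≤ f (Fin.cons true x) := fun x => hf0 _
    have hg11 : ∀ x : Cube n, f (Fin.cons true x) ≤ 1 := fun x => hf1 _
    have hgm0 : ∀ x : Cube n, 0 ≤ (f (Fin.cons false x) + f (Fin.cons true x))/2 := by
      intro x; have := hf0 (Fin.cons false x); have := hf0 (Fin.cons true x); linarith
    have hgm1 : ∀ x : Cube n, (f (Fin.cons false x) + f (Fin.cons true x))/2 ≤ 1 := by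
      intro x; have := hf1 (Fin.cons false x); have := hf1 (Fin.cons true x); linarith
    -- per-subset identity
    have hTerm : ∀ T' : Finset (Fin n),
        ((1-2*ε)^2) ^ (T'.map (Fin.succEmb n)).card
          * (1-(1-2*ε)^2) ^ ((n+1) - (T'.map (Fin.succEmb n)).card)
          * EX (fun x => H2 (condE f (T'.map (Fin.succEmb n)) x))
        + ((1-2*ε)^2) ^ (insert 0 (T'.map (Fin.succEmb n))).card
          * (1-(1-2*ε)^2) ^ ((n+1) - (insert 0 (T'.map (Fin.succEmb n))).card)
          * EX (fun x => H2 (condE f (insert 0 (T'.map (Fin.succEmb n))) x))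
        = (1-(1-2*ε)^2) * (((1-2*ε)^2) ^ T'.card * (1-(1-2*ε)^2) ^ (n - T'.card)
            * EX (fun x => H2 (condE (fun z => (f (Fin.cons false z) + f (Fin.cons true z))/2) T' x)))
          + (1-2*ε)^2 * ((((1-2*ε)^2) ^ T'.card * (1-(1-2*ε)^2) ^ (n - T'.card)
            * EX (fun x => H2 (condE (fun z => f (Fin.cons false z)) T' x))
            + ((1-2*ε)^2) ^ T'.card * (1-(1-2*ε)^2) ^ (n - T'.card)
            * EX (fun x => H2 (condE (fun z => f (Fin.cons true z)) T' x)))/2) := by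
      intro T'
      have hk : T'.card ≤ n := by
        have := Finset.card_le_univ T'
        simpa using this
      have hcard1 : (T'.map (Fin.succEmb n)).card = T'.card := Finset.card_map _
      have hcard2 : (insert 0 (T'.map (Fin.succEmb n))).card = T'.card + 1 := by
        rw [Finset.card_insert_of_notMem (zero_not_mem_map_succ T'), Finset.card_map]
      have hE1 : EX (fun x => H2 (condE f (T'.map (Fin.succEmb n)) x))
          = EX (fun x => H2 (condE
              (fun z => (f (Fin.cons false z) + f (Fin.cons true z))/2) T' x)) := by
        rw [EX_succ (fun x => H2 (condE f (T'.map (Fin.succEmb n)) x))]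
        have h1 : ∀ (a : Bool) (x : Cube n),
            condE f (T'.map (Fin.succEmb n)) (Fin.cons a x)
            = condE (fun z => (f (Fin.cons false z) + f (Fin.cons true z))/2) T' x := by
          intro a x
          rw [condE_cons_notmem f T' a x]
          exact (condE_avg (fun z => f (Fin.cons false z)) (fun z => f (Fin.cons true z))
            T' x).symm
        rw [show (fun x => H2 (condE f (T'.map (Fin.succEmb n)) (Fin.cons false x)))
            = fun x => H2 (condE (fun z => (f (Fin.cons false z) + f (Fin.cons true z))/2) T' x)
            from funext fun x => congrArg H2 (h1 false x)]
        rw [show (fun x => H2 (condE f (T'.map (Fin.succEmb n)) (Fin.cons true x)))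
            = fun x => H2 (condE (fun z => (f (Fin.cons false z) + f (Fin.cons true z))/2) T' x)
            from funext fun x => congrArg H2 (h1 true x)]
        ring
      have hE2 : EX (fun x => H2 (condE f (insert 0 (T'.map (Fin.succEmb n))) x))
          = (EX (fun x => H2 (condE (fun z => f (Fin.cons false z)) T' x))
            + EX (fun x => H2 (condE (fun z => f (Fin.cons true z)) T' x)))/2 := by
        rw [EX_succ (fun x => H2 (condE f (insert 0 (T'.map (Fin.succEmb n))) x))]
        rw [show (fun x => H2 (condE f (insert 0 (T'.map (Fin.succEmb n))) (Fin.cons false x)))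
            = fun x => H2 (condE (fun z => f (Fin.cons false z)) T' x)
            from funext fun x => congrArg H2 (condE_cons_mem f T' false x)]
        rw [show (fun x => H2 (condE f (insert 0 (T'.map (Fin.succEmb n))) (Fin.cons true x)))
            = fun x => H2 (condE (fun z => f (Fin.cons true z)) T' x)
            from funext fun x => congrArg H2 (condE_cons_mem f T' true x)]
      rw [hE1, hE2, hcard1, hcard2,
        show (n+1) - T'.card = (n - T'.card) + 1 by omega,
        show (n+1) - (T'.card + 1) = n - T'.card by omega,
        pow_succ, pow_succ]
      ring
    -- LHS identity
    have hLHS : ETsub ((1-2*ε)^2) (fun T => EX (fun x => H2 (condE f T x)))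
        = (1-(1-2*ε)^2) * ETsub ((1-2*ε)^2)
            (fun T => EX (fun x => H2 (condE
              (fun z => (f (Fin.cons false z) + f (Fin.cons true z))/2) T x)))
          + (1-2*ε)^2 * ((ETsub ((1-2*ε)^2)
              (fun T => EX (fun x => H2 (condE (fun z => f (Fin.cons false z)) T x)))
            + ETsub ((1-2*ε)^2)
              (fun T => EX (fun x => H2 (condE (fun z => f (Fin.cons true z)) T x))))/2) := by
      unfold ETsub
      rw [sum_finset_succ (fun T => ((1-2*ε)^2) ^ T.card * (1-(1-2*ε)^2) ^ ((n+1) - T.card)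
        * EX (fun x => H2 (condE f T x)))]
      rw [Finset.sum_congr rfl (fun T' _ => hTerm T')]
      rw [Finset.sum_add_distrib, ← Finset.mul_sum, ← Finset.mul_sum, ← Finset.sum_div,
        Finset.sum_add_distrib]
    -- RHS identity
    have hRHS : EX (fun y => H2 (noiseOp ε f y))
        = EX (fun y => (H2 ((1-ε) * noiseOp ε (fun x => f (Fin.cons false x)) y
              + ε * noiseOp ε (fun x => f (Fin.cons true x)) y)
            + H2 (ε * noiseOp ε (fun x => f (Fin.cons false x)) y
              + (1-ε) * noiseOp ε (fun x => f (Fin.cons true x)) y))/2) := by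
      rw [EX_succ (fun y => H2 (noiseOp ε f y))]
      rw [show (fun y => H2 (noiseOp ε f (Fin.cons false y)))
          = fun y => H2 ((1-ε) * noiseOp ε (fun x => f (Fin.cons false x)) y
              + ε * noiseOp ε (fun x => f (Fin.cons true x)) y)
          from funext fun y => congrArg H2 (noiseOp_cons ε f false y)]
      rw [show (fun y => H2 (noiseOp ε f (Fin.cons true y)))
          = fun y => H2 (ε * noiseOp ε (fun x => f (Fin.cons false x)) y
              + (1-ε) * noiseOp ε (fun x => f (Fin.cons true x)) y)
          from funext fun y => congrArg H2 ((noiseOp_cons ε f true y).trans (by rw [show (!true) = false from rfl]; ring))]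
      exact (EX_avg _ _).symm
    rw [hLHS, hRHS]
    -- apply induction hypothesis
    have ihm := ih ε hε0 hε1 (fun z => (f (Fin.cons false z) + f (Fin.cons true z))/2) hgm0 hgm1
    have ih0 := ih ε hε0 hε1 (fun z => f (Fin.cons false z)) hg00 hg01
    have ih1 := ih ε hε0 hε1 (fun z => f (Fin.cons true z)) hg10 hg11
    calc (1-(1-2*ε)^2) * ETsub ((1-2*ε)^2)
            (fun T => EX (fun x => H2 (condE
              (fun z => (f (Fin.cons false z) + f (Fin.cons true z))/2) T x)))
          + (1-2*ε)^2 * ((ETsub ((1-2*ε)^2)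
              (fun T => EX (fun x => H2 (condE (fun z => f (Fin.cons false z)) T x)))
            + ETsub ((1-2*ε)^2)
              (fun T => EX (fun x => H2 (condE (fun z => f (Fin.cons true z)) T x))))/2)
        ≤ (1-(1-2*ε)^2) * EX (fun y => H2 (noiseOp ε
              (fun z => (f (Fin.cons false z) + f (Fin.cons true z))/2) y))
          + (1-2*ε)^2 * ((EX (fun y => H2 (noiseOp ε (fun z => f (Fin.cons false z)) y))
            + EX (fun y => H2 (noiseOp ε (fun z => f (Fin.cons true z)) y)))/2) := by
          apply add_le_add (mul_le_mul_of_nonneg_left ihm h1l)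
            (mul_le_mul_of_nonneg_left (by linarith) hl0)
      _ = EX (fun y => (1-(1-2*ε)^2) * H2 (noiseOp ε
              (fun z => (f (Fin.cons false z) + f (Fin.cons true z))/2) y)
          + (1-2*ε)^2 * ((H2 (noiseOp ε (fun z => f (Fin.cons false z)) y)
            + H2 (noiseOp ε (fun z => f (Fin.cons true z)) y))/2)) :=
          (EX_combo _ _ _ _ _).symm
      _ ≤ EX (fun y => (H2 ((1-ε) * noiseOp ε (fun x => f (Fin.cons false x)) y
              + ε * noiseOp ε (fun x => f (Fin.cons true x)) y)
            + H2 (ε * noiseOp ε (fun x => f (Fin.cons false x)) y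
              + (1-ε) * noiseOp ε (fun x => f (Fin.cons true x)) y))/2) := by
          apply EX_mono
          intro y
          have hna : noiseOp ε (fun z => (f (Fin.cons false z) + f (Fin.cons true z))/2) y
              = (noiseOp ε (fun z => f (Fin.cons false z)) y
                + noiseOp ε (fun z => f (Fin.cons true z)) y)/2 :=
            noiseOp_avg ε (fun z => f (Fin.cons false z)) (fun z => f (Fin.cons true z)) y
          rw [hna]
          linarith [star ε (noiseOp ε (fun z => f (Fin.cons false z)) y)
            (noiseOp ε (fun z => f (Fin.cons true z)) y) hε0 hε1
            (noiseOp_nonneg hε0 hε1 hg00 y) (noiseOp_le_one hε0 hε1 hg01 y)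
            (noiseOp_nonneg hε0 hε1 hg10 y) (noiseOp_le_one hε0 hε1 hg11 y)]

lemma ETsub_const_one : ∀ (n : ℕ) (l : ℝ), ETsub (n := n) l (fun _ => (1:ℝ)) = 1 := by
  intro n
  induction n with
  | zero =>
    intro l
    unfold ETsub
    rw [finset_fin_zero_univ]
    simp
  | succ n ih =>
    intro l
    unfold ETsub
    rw [sum_finset_succ (fun T => l ^ T.card * (1 - l) ^ ((n+1) - T.card) * 1)]
    have hTerm : ∀ T' : Finset (Fin n),
        l ^ (T'.map (Fin.succEmb n)).card
          * (1-l) ^ ((n+1) - (T'.map (Fin.succEmb n)).card) * 1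
        + l ^ (insert 0 (T'.map (Fin.succEmb n))).card
          * (1-l) ^ ((n+1) - (insert 0 (T'.map (Fin.succEmb n))).card) * 1
        = l ^ T'.card * (1-l) ^ (n - T'.card) * 1 := by
      intro T'
      have hk : T'.card ≤ n := by
        have := Finset.card_le_univ T'
        simpa using this
      rw [Finset.card_map, Finset.card_insert_of_notMem (zero_not_mem_map_succ T'),
        Finset.card_map, show (n+1) - T'.card = (n - T'.card) + 1 by omega,
        show (n+1) - (T'.card + 1) = n - T'.card by omega, pow_succ, pow_succ]
      ring
    rw [Finset.sum_congr rfl (fun T' _ => hTerm T')]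
    exact ih l

lemma ETsub_sub_const {n : ℕ} (l C : ℝ) (B : Finset (Fin n) → ℝ) :
    ETsub l (fun T => C - B T) = C - ETsub l B := by
  have h : ETsub l (fun T => C - B T) = C * ETsub (n := n) l (fun _ => (1:ℝ)) - ETsub l B := by
    unfold ETsub
    rw [Finset.mul_sum, ← Finset.sum_sub_distrib]
    apply Finset.sum_congr rfl
    intro T _
    ring
  rw [h, ETsub_const_one, mul_one]

end SamorodnitskyAux

/-- for boolean `f`, `I(f(X);Y) ≤ E_T I(f(X); {X_i}_{i∈T})`, where
`I(f(X);Y) = H₂(E_x f) - E_y H₂((T_ε f)(y))` and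
`I(f(X);{X_i}_{i∈T}) = H₂(E_x f) - E H₂(E(f|T))`. -/
theorem stmt6 {n : ℕ} (ε : ℝ) (hε0 : 0 ≤ ε) (hε1 : ε ≤ 1 / 2)
    (f : Cube n → ℝ) (hf : ∀ x, f x = 0 ∨ f x = 1) :
    H2 (EX f) - EX (fun y => H2 (noiseOp ε f y)) ≤
      ETsub ((1 - 2 * ε) ^ 2) (fun T => H2 (EX f) - EX (fun x => H2 (condE f T x))) := by

  have hf0 : ∀ x, 0 ≤ f x := by
    intro x; rcases hf x with h | h <;> rw [h] <;> norm_num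
  have hf1 : ∀ x, f x ≤ 1 := by
    intro x; rcases hf x with h | h <;> rw [h] <;> norm_num
  rw [ETsub_sub_const]
  have := main_ind n ε hε0 hε1 f hf0 hf1
  linarith
end

section
/- Let n ≥ 2, let 1 ≤ s ≤ n−1 be an integer, and let 0 < λ < 1. Then Σ_{k=s}^{n−1} Λ(k,s,λ) = (n − s/λ) + (1/λ)·Σ_{j=0}^{s−1} Σ_{t=0}^{j} C(n,t)·λ^t·(1−λ)^{n−t}, where Λ(k,s,λ) = 1 − Σ_{j=0}^{s−1} C(k,j)·λ^j·(1−λ)^{k−j}. -/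
open Finset

noncomputable def Fb (l : ℝ) (k t : ℕ) : ℝ := (k.choose t : ℝ) * l ^ t * (1 - l) ^ (k - t)

lemma Fb_total (l : ℝ) (k : ℕ) : ∑ t ∈ Finset.range (k + 1), Fb l k t = 1 := by
  calc ∑ t ∈ Finset.range (k + 1), Fb l k t = (l + (1 - l)) ^ k := by
        rw [add_pow]
        exact Finset.sum_congr rfl fun t _ => by unfold Fb; ring
    _ = 1 := by simp

lemma Fb_step (l : ℝ) (m j : ℕ) (hj : j ≤ m) :
    ∑ t ∈ Finset.range (j + 1), Fb l (m + 1) t =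
      ∑ t ∈ Finset.range (j + 1), Fb l m t - l * Fb l m j := by
  induction j with
  | zero =>
      simp only [Finset.sum_range_succ, Finset.sum_range_zero, zero_add]
      unfold Fb
      simp only [Nat.choose_zero_right, pow_zero, Nat.sub_zero, Nat.cast_one, one_mul, mul_one]
      rw [pow_succ]
      ring
  | succ j ih =>
      have hjm : j ≤ m := by omega
      have hkey : Fb l (m + 1) (j + 1) = Fb l m (j + 1) + l * Fb l m j - l * Fb l m (j + 1) := by
        unfold Fb
        have h1 : (m + 1).choose (j + 1) = m.choose j + m.choose (j + 1) :=
          Nat.choose_succ_succ m j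
        have h2 : m + 1 - (j + 1) = m - j := by omega
        have h3 : m - j = (m - (j + 1)) + 1 := by omega
        rw [h1, h2, h3, pow_succ, pow_succ]
        push_cast
        ring
      rw [Finset.sum_range_succ, ih hjm, hkey]
      conv_rhs => rw [Finset.sum_range_succ]
      ring

lemma Fb_mean (l : ℝ) (s : ℕ) :
    ∑ j ∈ Finset.range s, ∑ t ∈ Finset.range (j + 1), Fb l s t = s * (1 - l) := by
  induction s with
  | zero => simp
  | succ s ih =>
      have h : ∀ j ∈ Finset.range (s + 1),
          ∑ t ∈ Finset.range (j + 1), Fb l (s + 1) t =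
            ∑ t ∈ Finset.range (j + 1), Fb l s t - l * Fb l s j := by
        intro j hj
        exact Fb_step l s j (by simpa using Nat.lt_succ_iff.mp (Finset.mem_range.mp hj))
      rw [Finset.sum_congr rfl h, Finset.sum_sub_distrib, ← Finset.mul_sum, Fb_total,
        Finset.sum_range_succ, ih, Fb_total]
      push_cast
      ring

lemma key_lemma (l : ℝ) (hl : l ≠ 0) (s : ℕ) (hs1 : 1 ≤ s) : ∀ m : ℕ, s - 1 ≤ m →
    ∑ k ∈ Finset.Icc s m, Lam k s l =
      (((m : ℝ) + 1) - s / l) + (1 / l) * ∑ j ∈ Finset.range s,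
        ∑ t ∈ Finset.range (j + 1), Fb l (m + 1) t := by
  intro m
  induction m with
  | zero =>
      intro h
      have hs : s = 1 := by omega
      subst hs
      simp [Lam, Fb, Finset.sum_range_succ]
      field_simp
      ring
  | succ m ih =>
      intro h
      by_cases hm : s - 1 ≤ m
      · have hsm : s ≤ m + 1 := by omega
        rw [Finset.sum_Icc_succ_top hsm, ih hm]
        have hstep : ∀ j ∈ Finset.range s,
            ∑ t ∈ Finset.range (j + 1), Fb l (m + 1 + 1) t =
              ∑ t ∈ Finset.range (j + 1), Fb l (m + 1) t - l * Fb l (m + 1) j := by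
          intro j hj
          exact Fb_step l (m + 1) j (by have := Finset.mem_range.mp hj; omega)
        rw [Finset.sum_congr rfl hstep, Finset.sum_sub_distrib, ← Finset.mul_sum]
        have hLam : Lam (m + 1) s l = 1 - ∑ j ∈ Finset.range s, Fb l (m + 1) j := by
          unfold Lam Fb; rfl
        rw [hLam]
        push_cast
        field_simp
        ring
      · -- base case: m + 1 = s - 1, i.e. s = m + 2, interval empty
        have hs : s = m + 2 := by omega
        subst hs
        have hempty : Finset.Icc (m + 2) (m + 1) = ∅ := by
          apply Finset.Icc_eq_empty; omega
        rw [hempty, Finset.sum_empty, Fb_mean]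
        push_cast
        field_simp
        ring

/-- for `n ≥ 2`, `1 ≤ s ≤ n-1` and `0 < λ < 1`,
`∑_{k=s}^{n-1} Λ(k,s,λ) = (n - s/λ) + (1/λ) ∑_{j=0}^{s-1} ∑_{t=0}^{j} C(n,t) λ^t (1-λ)^{n-t}`. -/
theorem stmt12 (n s : ℕ) (hn : 2 ≤ n) (hs1 : 1 ≤ s) (hsn : s ≤ n - 1)
    (l : ℝ) (hl0 : 0 < l) (hl1 : l < 1) :
    ∑ k ∈ Finset.Icc s (n - 1), Lam k s l =
      ((n : ℝ) - (s : ℝ) / l) +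
        (1 / l) * ∑ j ∈ Finset.range s, ∑ t ∈ Finset.range (j + 1),
          (Nat.choose n t : ℝ) * l ^ t * (1 - l) ^ (n - t) := by
  have h := key_lemma l (ne_of_gt hl0) s hs1 (n - 1) (by omega)
  have hn1 : n - 1 + 1 = n := by omega
  rw [hn1] at h
  have hc : ((n - 1 : ℕ) : ℝ) + 1 = (n : ℝ) := by
    have h1 : 1 ≤ n := by omega
    push_cast [Nat.cast_sub h1]
    ring
  rw [h, hc]
  simp only [Fb]
end

section
/- Let f : {0,1}^n → ℝ be nonnegative. For every integer 0 ≤ u ≤ n−1: E_{|B| = u+1} Ent(f | B) − (u+1)·E_{i∈{1,…,n}} Ent(f | {i}) = Σ_{s=1}^{u} (u − s + 1)·t_s, where the first expectation is over subsets B ⊆ {1,…,n} of cardinality u+1 chosen uniformly, the second over a uniform index i, and t_s is the average of Z_{S;i,j}(f) over subsets S ⊆ {1,…,n} with |S| = s−1 and over distinct i,j ∉ S. -/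
open Finset

section AuxLemmas

open Finset

lemma myEntC_empty {n : ℕ} (f : Cube n → ℝ) : EntC f ∅ = 0 := by
  have hc : condE f ∅ = fun _ => (∑ z : Cube n, f z) / (2 ^ n : ℝ) := by
    funext x
    simp [condE]
  have hcard : (Finset.univ : Finset (Cube n)).card = 2 ^ n := by
    simp [Finset.card_univ, Fintype.card_fun]
  set c : ℝ := (∑ z : Cube n, f z) / (2 ^ n : ℝ) with hcdef
  have h2 : (2 : ℝ) ^ n ≠ 0 := by positivity
  rw [EntC, hc, Ent, EX, EX]
  rw [Finset.sum_const, Finset.sum_const, hcard, nsmul_eq_mul, nsmul_eq_mul]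
  push_cast
  field_simp
  ring

lemma myfilter_card {n m : ℕ} :
    ((Finset.univ : Finset (Finset (Fin n))).filter (fun S => S.card = m)).card
      = n.choose m := by
  have : (Finset.univ : Finset (Finset (Fin n))).filter (fun S => S.card = m)
      = Finset.powersetCard m Finset.univ := by
    ext S; simp [Finset.mem_powersetCard]
  rw [this, Finset.card_powersetCard, Finset.card_univ, Fintype.card_fin]

lemma myL1 {n m : ℕ} (g : Finset (Fin n) → ℝ) :
    ∑ S ∈ (Finset.univ : Finset (Finset (Fin n))).filter (fun S => S.card = m),
      ∑ i ∈ Sᶜ, g (insert i S)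
    = ((m : ℝ) + 1) *
        ∑ B ∈ (Finset.univ : Finset (Finset (Fin n))).filter (fun B => B.card = m + 1), g B := by
  rw [Finset.mul_sum]
  have h1 : ∀ B ∈ (Finset.univ : Finset (Finset (Fin n))).filter (fun B => B.card = m + 1),
      ((m : ℝ) + 1) * g B = ∑ i ∈ B, g B := by
    intro B hB
    simp only [Finset.mem_filter] at hB
    rw [Finset.sum_const, hB.2, nsmul_eq_mul]
    push_cast; ring
  rw [Finset.sum_congr rfl h1, Finset.sum_sigma', Finset.sum_sigma']
  refine Finset.sum_nbij' (fun p => ⟨insert p.2 p.1, p.2⟩) (fun p => ⟨p.1.erase p.2, p.2⟩)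
    ?_ ?_ ?_ ?_ ?_
  · rintro ⟨S, i⟩ hp
    simp only [Finset.mem_sigma, Finset.mem_filter, Finset.mem_univ, true_and,
      Finset.mem_compl] at hp ⊢
    exact ⟨by rw [Finset.card_insert_of_notMem hp.2, hp.1], Finset.mem_insert_self _ _⟩
  · rintro ⟨B, i⟩ hp
    simp only [Finset.mem_sigma, Finset.mem_filter, Finset.mem_univ, true_and,
      Finset.mem_compl] at hp ⊢
    constructor
    · rw [Finset.card_erase_of_mem hp.2, hp.1]; rfl
    · exact Finset.notMem_erase _ _
  · rintro ⟨S, i⟩ hp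
    simp only [Finset.mem_sigma, Finset.mem_filter, Finset.mem_univ, true_and,
      Finset.mem_compl] at hp
    simp [Finset.erase_insert hp.2]
  · rintro ⟨B, i⟩ hp
    simp only [Finset.mem_sigma, Finset.mem_filter, Finset.mem_univ, true_and] at hp
    simp [Finset.insert_erase hp.2]
  · rintro ⟨S, i⟩ hp; rfl

lemma myswap {n : ℕ} (S : Finset (Fin n)) (F : Fin n → Fin n → ℝ) :
    ∑ i ∈ Sᶜ, ∑ j ∈ Sᶜ \ {i}, F i j = ∑ j ∈ Sᶜ, ∑ i ∈ Sᶜ \ {j}, F i j := by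
  rw [Finset.sum_comm' (s := Sᶜ) (t := fun i => Sᶜ \ {i}) (t' := Sᶜ)
    (s' := fun j => Sᶜ \ {j})]
  intro i j
  simp only [Finset.mem_sdiff, Finset.mem_singleton]
  constructor
  · rintro ⟨h1, h2, h3⟩; exact ⟨⟨h1, fun h => h3 h.symm⟩, h2⟩
  · rintro ⟨⟨h1, h3⟩, h2⟩; exact ⟨h1, h2, fun h => h3 h.symm⟩

lemma myL2 {n : ℕ} (g : Finset (Fin n) → ℝ) (m : ℕ) :
    ∑ S ∈ (Finset.univ : Finset (Finset (Fin n))).filter (fun S => S.card = m),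
      ∑ i ∈ Sᶜ, ∑ j ∈ Sᶜ \ {i}, g (insert i (insert j S))
    = ((m : ℝ) + 1) * (((m : ℝ) + 2) *
        ∑ B ∈ (Finset.univ : Finset (Finset (Fin n))).filter (fun B => B.card = m + 2), g B) := by
  have hswap : ∀ S : Finset (Fin n),
      ∑ i ∈ Sᶜ, ∑ j ∈ Sᶜ \ {i}, g (insert i (insert j S))
        = ∑ j ∈ Sᶜ, ∑ i ∈ (insert j S)ᶜ, g (insert i (insert j S)) := by
    intro S
    rw [myswap]
    apply Finset.sum_congr rfl
    intro j hj
    apply Finset.sum_congr _ (fun _ _ => rfl)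
    rw [Finset.compl_insert, Finset.erase_eq]
  calc ∑ S ∈ (Finset.univ : Finset (Finset (Fin n))).filter (fun S => S.card = m),
      ∑ i ∈ Sᶜ, ∑ j ∈ Sᶜ \ {i}, g (insert i (insert j S))
      = ∑ S ∈ (Finset.univ : Finset (Finset (Fin n))).filter (fun S => S.card = m),
        ∑ j ∈ Sᶜ, (fun T => ∑ i ∈ Tᶜ, g (insert i T)) (insert j S) :=
        Finset.sum_congr rfl (fun S _ => hswap S)
    _ = ((m : ℝ) + 1) * ∑ T ∈ (Finset.univ : Finset (Finset (Fin n))).filter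
          (fun T => T.card = m + 1), ∑ i ∈ Tᶜ, g (insert i T) :=
        myL1 (fun T => ∑ i ∈ Tᶜ, g (insert i T))
    _ = ((m : ℝ) + 1) * ((((m + 1 : ℕ) : ℝ) + 1) *
          ∑ B ∈ (Finset.univ : Finset (Finset (Fin n))).filter (fun B => B.card = m + 1 + 1),
            g B) := by rw [myL1 g]
    _ = _ := by push_cast; ring

lemma mytele1 (a : ℕ → ℝ) (u : ℕ) :
    ∑ s ∈ Finset.Icc 1 u, (a (s+1) - 2 * a s + a (s-1)) = a (u+1) - a u - a 1 + a 0 := by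
  induction u with
  | zero => simp
  | succ u ih =>
    rw [Finset.sum_Icc_succ_top (by omega : 1 ≤ u + 1), ih]
    simp only [Nat.add_sub_cancel]
    ring

lemma mytele2 (a : ℕ → ℝ) (h0 : a 0 = 0) (u : ℕ) :
    ∑ s ∈ Finset.Icc 1 u, ((u : ℝ) - (s : ℝ) + 1) * (a (s+1) - 2 * a s + a (s-1))
      = a (u+1) - ((u : ℝ) + 1) * a 1 := by
  induction u with
  | zero => simp
  | succ u ih =>
    have step : ∀ s ∈ Finset.Icc 1 (u+1),
        (((u+1 : ℕ) : ℝ) - (s : ℝ) + 1) * (a (s+1) - 2 * a s + a (s-1))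
          = ((u : ℝ) - (s : ℝ) + 1) * (a (s+1) - 2 * a s + a (s-1))
            + (a (s+1) - 2 * a s + a (s-1)) := by
      intro s _; push_cast; ring
    rw [Finset.sum_congr rfl step, Finset.sum_add_distrib, mytele1 a (u+1),
      Finset.sum_Icc_succ_top (by omega : 1 ≤ u + 1), ih]
    simp only [Nat.add_sub_cancel, h0]
    push_cast; ring

lemma mytAvg {n : ℕ} (f : Cube n → ℝ) (m : ℕ) (hm : m + 2 ≤ n) :
    tAvg f (m+1) =
      (∑ S ∈ (Finset.univ : Finset (Finset (Fin n))).filter (fun S => S.card = m + 2),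
          EntC f S) / (n.choose (m+2) : ℝ)
      - 2 * ((∑ S ∈ (Finset.univ : Finset (Finset (Fin n))).filter (fun S => S.card = m + 1),
          EntC f S) / (n.choose (m+1) : ℝ))
      + (∑ S ∈ (Finset.univ : Finset (Finset (Fin n))).filter (fun S => S.card = m),
          EntC f S) / (n.choose m : ℝ) := by
  set E0 : ℝ := ∑ S ∈ (Finset.univ : Finset (Finset (Fin n))).filter (fun S => S.card = m),
    EntC f S with hE0
  set E1 : ℝ := ∑ S ∈ (Finset.univ : Finset (Finset (Fin n))).filter (fun S => S.card = m + 1),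
    EntC f S with hE1
  set E2 : ℝ := ∑ S ∈ (Finset.univ : Finset (Finset (Fin n))).filter (fun S => S.card = m + 2),
    EntC f S with hE2
  set c0 : ℝ := (n.choose m : ℝ) with hc0
  set c1 : ℝ := (n.choose (m+1) : ℝ) with hc1
  set c2 : ℝ := (n.choose (m+2) : ℝ) with hc2
  set r1 : ℝ := ((n - m : ℕ) : ℝ) with hr1
  set r2 : ℝ := ((n - m - 1 : ℕ) : ℝ) with hr2
  -- basic cardinality facts
  have hScard : ∀ S ∈ (Finset.univ : Finset (Finset (Fin n))).filter (fun S => S.card = m),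
      Sᶜ.card = n - m := by
    intro S hS
    simp only [Finset.mem_filter] at hS
    rw [Finset.card_compl, Fintype.card_fin, hS.2]
  have hSdcard : ∀ S ∈ (Finset.univ : Finset (Finset (Fin n))).filter (fun S => S.card = m),
      ∀ i ∈ Sᶜ, (Sᶜ \ {i}).card = n - m - 1 := by
    intro S hS i hi
    rw [Finset.card_sdiff_of_subset (by simpa using hi), Finset.card_singleton, hScard S hS]
  -- nonzeroness / positivity
  have hc0pos : 0 < n.choose m := Nat.choose_pos (by omega)
  have hc1pos : 0 < n.choose (m+1) := Nat.choose_pos (by omega)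
  have hc2pos : 0 < n.choose (m+2) := Nat.choose_pos hm
  have hc0ne : c0 ≠ 0 := by rw [hc0]; exact_mod_cast hc0pos.ne'
  have hc1ne : c1 ≠ 0 := by rw [hc1]; exact_mod_cast hc1pos.ne'
  have hc2ne : c2 ≠ 0 := by rw [hc2]; exact_mod_cast hc2pos.ne'
  have hr1ne : r1 ≠ 0 := by
    rw [hr1]; have : 0 < n - m := by omega
    exact_mod_cast this.ne'
  have hr2ne : r2 ≠ 0 := by
    rw [hr2]; have : 0 < n - m - 1 := by omega
    exact_mod_cast this.ne'
  have hDne : c0 * r1 * r2 ≠ 0 := by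
    exact mul_ne_zero (mul_ne_zero hc0ne hr1ne) hr2ne
  -- choose identities
  have k1 : c1 * ((m : ℝ) + 1) = c0 * r1 := by
    rw [hc0, hc1, hr1]
    exact_mod_cast Nat.choose_succ_right_eq n m
  have k2 : c2 * ((m : ℝ) + 2) = c1 * r2 := by
    rw [hc1, hc2, hr2]
    have := Nat.choose_succ_right_eq n (m + 1)
    have h' : n - (m + 1) = n - m - 1 := by omega
    rw [h'] at this
    exact_mod_cast this
  -- denominator of tAvg
  have hden : (∑ S ∈ (Finset.univ : Finset (Finset (Fin n))).filter (fun S => S.card = m),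
      ∑ i ∈ Sᶜ, (((Sᶜ \ {i}).card : ℕ) : ℝ)) = c0 * r1 * r2 := by
    rw [Finset.sum_congr rfl (fun S hS => by
      rw [Finset.sum_congr rfl (fun i hi => by rw [hSdcard S hS i hi]),
        Finset.sum_const, hScard S hS, nsmul_eq_mul])]
    rw [Finset.sum_const, myfilter_card, nsmul_eq_mul, hc0, hr1, hr2]
    ring
  -- the four pieces of the numerator
  have hN1 : (∑ S ∈ (Finset.univ : Finset (Finset (Fin n))).filter (fun S => S.card = m),
      ∑ i ∈ Sᶜ, ∑ j ∈ Sᶜ \ {i}, EntC f (insert i (insert j S)))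
      = ((m : ℝ) + 1) * (((m : ℝ) + 2) * E2) := by
    rw [myL2 (EntC f) m, hE2]
  have hN2 : (∑ S ∈ (Finset.univ : Finset (Finset (Fin n))).filter (fun S => S.card = m),
      ∑ i ∈ Sᶜ, ∑ j ∈ Sᶜ \ {i}, EntC f (insert i S))
      = r2 * (((m : ℝ) + 1) * E1) := by
    rw [Finset.sum_congr rfl (fun S hS => Finset.sum_congr rfl (fun i hi => by
      rw [Finset.sum_const, hSdcard S hS i hi, nsmul_eq_mul, ← hr2]))]
    have : ∀ S ∈ (Finset.univ : Finset (Finset (Fin n))).filter (fun S => S.card = m),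
        ∑ i ∈ Sᶜ, r2 * EntC f (insert i S) = r2 * ∑ i ∈ Sᶜ, EntC f (insert i S) := by
      intro S _; rw [Finset.mul_sum]
    rw [Finset.sum_congr rfl this, ← Finset.mul_sum, myL1 (EntC f), hE1]
  have hN3 : (∑ S ∈ (Finset.univ : Finset (Finset (Fin n))).filter (fun S => S.card = m),
      ∑ i ∈ Sᶜ, ∑ j ∈ Sᶜ \ {i}, EntC f (insert j S))
      = r2 * (((m : ℝ) + 1) * E1) := by
    rw [Finset.sum_congr rfl
      (fun S _ => myswap S (fun i j => EntC f (insert j S)))]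
    rw [Finset.sum_congr rfl (fun S hS => Finset.sum_congr rfl (fun j hj => by
      rw [Finset.sum_const, hSdcard S hS j hj, nsmul_eq_mul, ← hr2]))]
    have : ∀ S ∈ (Finset.univ : Finset (Finset (Fin n))).filter (fun S => S.card = m),
        ∑ j ∈ Sᶜ, r2 * EntC f (insert j S) = r2 * ∑ j ∈ Sᶜ, EntC f (insert j S) := by
      intro S _; rw [Finset.mul_sum]
    rw [Finset.sum_congr rfl this, ← Finset.mul_sum, myL1 (EntC f), hE1]
  have hN4 : (∑ S ∈ (Finset.univ : Finset (Finset (Fin n))).filter (fun S => S.card = m),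
      ∑ i ∈ Sᶜ, ∑ j ∈ Sᶜ \ {i}, EntC f S) = r1 * (r2 * E0) := by
    rw [Finset.sum_congr rfl (fun S hS => by
      rw [Finset.sum_congr rfl (fun i hi => by
        rw [Finset.sum_const, hSdcard S hS i hi, nsmul_eq_mul, ← hr2]),
        Finset.sum_const, hScard S hS, nsmul_eq_mul, ← hr1])]
    rw [hE0]
    simp only [Finset.mul_sum]
  -- now unfold tAvg
  rw [tAvg]
  simp only [Nat.add_sub_cancel, Zfun]
  have hnum : (∑ S ∈ (Finset.univ : Finset (Finset (Fin n))).filter (fun S => S.card = m),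
      ∑ i ∈ Sᶜ, ∑ j ∈ Sᶜ \ {i},
        (EntC f (insert i (insert j S)) - EntC f (insert i S) - EntC f (insert j S)
          + EntC f S))
      = ((m : ℝ) + 1) * (((m : ℝ) + 2) * E2) - r2 * (((m : ℝ) + 1) * E1)
        - r2 * (((m : ℝ) + 1) * E1) + r1 * (r2 * E0) := by
    simp only [Finset.sum_sub_distrib, Finset.sum_add_distrib]
    rw [hN1, hN2, hN3, hN4]
  rw [hnum, hden]
  -- scalar identities
  have hD1 : c0 * r1 * r2 = c1 * (((m : ℝ) + 1) * r2) := by linear_combination (-r2) * k1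
  have hD2 : c0 * r1 * r2 = c2 * (((m : ℝ) + 1) * ((m : ℝ) + 2)) := by
    linear_combination (-((m : ℝ) + 1)) * k2 - r2 * k1
  have e2 : E2 / c2 = (((m : ℝ) + 1) * (((m : ℝ) + 2) * E2)) / (c0 * r1 * r2) := by
    rw [div_eq_div_iff hc2ne hDne]
    linear_combination E2 * hD2
  have e1 : E1 / c1 = (r2 * (((m : ℝ) + 1) * E1)) / (c0 * r1 * r2) := by
    rw [div_eq_div_iff hc1ne hDne]
    linear_combination E1 * hD1
  have e0 : E0 / c0 = (r1 * (r2 * E0)) / (c0 * r1 * r2) := by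
    rw [div_eq_div_iff hc0ne hDne]
    ring
  rw [e2, e1, e0]
  ring

end AuxLemmas

/-- for nonnegative `f` and `0 ≤ u ≤ n-1`,
`E_{|B|=u+1} Ent(f|B) - (u+1) E_i Ent(f|{i}) = ∑_{s=1}^{u} (u-s+1) t_s`. -/
theorem stmt14 {n : ℕ} (f : Cube n → ℝ) (hf : ∀ x, 0 ≤ f x)
    (u : ℕ) (hu : u + 1 ≤ n) :
    (∑ B ∈ (Finset.univ : Finset (Finset (Fin n))).filter (fun B => B.card = u + 1),
        EntC f B) / (Nat.choose n (u + 1) : ℝ) -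
      ((u : ℝ) + 1) * ((∑ i : Fin n, EntC f {i}) / (n : ℝ)) =
      ∑ s ∈ Finset.Icc 1 u, ((u : ℝ) - (s : ℝ) + 1) * tAvg f s := by
    classical
  set a : ℕ → ℝ := fun k =>
    (∑ S ∈ (Finset.univ : Finset (Finset (Fin n))).filter (fun S => S.card = k), EntC f S) /
      (n.choose k : ℝ) with ha
  have h0 : a 0 = 0 := by
    have hfil : (Finset.univ : Finset (Finset (Fin n))).filter (fun S => S.card = 0)
        = {∅} := by
      ext S; simp [Finset.card_eq_zero]
    simp only [ha]
    rw [hfil, Finset.sum_singleton, myEntC_empty f]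
    simp
  have h1 : (∑ i : Fin n, EntC f {i})
      = ∑ S ∈ (Finset.univ : Finset (Finset (Fin n))).filter (fun S => S.card = 1),
          EntC f S := by
    have hfil : (Finset.univ : Finset (Finset (Fin n))).filter (fun S => S.card = 1)
        = Finset.univ.image (fun i : Fin n => ({i} : Finset (Fin n))) := by
      ext S
      simp [Finset.card_eq_one, eq_comm]
    rw [hfil, Finset.sum_image (fun i _ j _ h => Finset.singleton_injective h)]
  have key : ∀ s ∈ Finset.Icc 1 u, tAvg f s = a (s+1) - 2 * a s + a (s-1) := by
    intro s hs
    simp only [Finset.mem_Icc] at hs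
    obtain ⟨m, rfl⟩ : ∃ m, s = m + 1 := ⟨s - 1, by omega⟩
    have hm : m + 2 ≤ n := by omega
    rw [mytAvg f m hm]
    simp only [Nat.add_sub_cancel, ha]
  calc (∑ B ∈ (Finset.univ : Finset (Finset (Fin n))).filter (fun B => B.card = u + 1),
        EntC f B) / (n.choose (u + 1) : ℝ) -
      ((u : ℝ) + 1) * ((∑ i : Fin n, EntC f {i}) / (n : ℝ))
      = a (u + 1) - ((u : ℝ) + 1) * a 1 := by
        rw [ha]
        simp only
        rw [h1, Nat.choose_one_right]
    _ = ∑ s ∈ Finset.Icc 1 u, ((u : ℝ) - (s : ℝ) + 1) * (a (s+1) - 2 * a s + a (s-1)) :=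
        (mytele2 a h0 u).symm
    _ = ∑ s ∈ Finset.Icc 1 u, ((u : ℝ) - (s : ℝ) + 1) * tAvg f s :=
        Finset.sum_congr rfl (fun s hs => by rw [key s hs])
end

section
/- Let x₁ ≥ x₂ ≥ … ≥ x_N ≥ 0 be nonnegative reals summing to 1. Define y_k = x_k² / (Σ_{i=1}^N x_i²) for k = 1,…,N. Then (y₁,…,y_N) majorizes (x₁,…,x_N): for every 1 ≤ t ≤ N, Σ_{k=1}^{t} y_k ≥ Σ_{k=1}^{t} x_k, with equality when t = N. -/
open Finset

/-- if `x₁ ≥ … ≥ x_N ≥ 0` sum to 1 and `y_k = x_k²/∑ x_i²`, then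
`(y_k)` majorizes `(x_k)`: every partial sum of the `y`'s dominates that of the `x`'s,
with equality for the total sum. -/
theorem stmt16 (N : ℕ) (hN : 1 ≤ N) (x : ℕ → ℝ)
    (hnn : ∀ i, i < N → 0 ≤ x i)
    (hmono : ∀ i j, i ≤ j → j < N → x j ≤ x i)
    (hsum : ∑ i ∈ Finset.range N, x i = 1) :
    (∀ t, 1 ≤ t → t ≤ N →
        ∑ k ∈ Finset.range t, x k ≤
          ∑ k ∈ Finset.range t, x k ^ 2 / (∑ i ∈ Finset.range N, x i ^ 2)) ∧
      ∑ k ∈ Finset.range N, x k ^ 2 / (∑ i ∈ Finset.range N, x i ^ 2) =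
        ∑ k ∈ Finset.range N, x k := by
  have hSdef : ∑ i ∈ Finset.range N, x i ^ 2 = ∑ i ∈ Finset.range N, x i ^ 2 := rfl
  have h0 : 0 < x 0 := by
    rcases lt_or_ge 0 (x 0) with h | h
    · exact h
    · exfalso
      have hz : ∑ i ∈ Finset.range N, x i = 0 := by
        apply Finset.sum_eq_zero
        intro i hi
        have hi' := Finset.mem_range.mp hi
        have h1 := hmono 0 i (Nat.zero_le i) hi'
        have h2 := hnn i hi'
        linarith
      linarith
  have hSpos : 0 < ∑ i ∈ Finset.range N, x i ^ 2 := by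
    have hle : x 0 ^ 2 ≤ ∑ i ∈ Finset.range N, x i ^ 2 := by
      apply Finset.single_le_sum (f := fun i => x i ^ 2)
      · intro i _; positivity
      · exact Finset.mem_range.mpr hN
    nlinarith
  constructor
  · intro t ht htN
    have hsplit : ∑ k ∈ Finset.range t, x k ^ 2 + ∑ i ∈ Finset.Ico t N, x i ^ 2
        = ∑ i ∈ Finset.range N, x i ^ 2 := by
      rw [Finset.range_eq_Ico, Finset.range_eq_Ico]
      exact Finset.sum_Ico_consecutive _ (Nat.zero_le t) htN
    have hsplit' : ∑ k ∈ Finset.range t, x k + ∑ i ∈ Finset.Ico t N, x i = 1 := by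
      rw [← hsum, Finset.range_eq_Ico, Finset.range_eq_Ico]
      exact Finset.sum_Ico_consecutive _ (Nat.zero_le t) htN
    have hc0 : 0 ≤ x (t - 1) := hnn _ (by omega)
    have hA0 : 0 ≤ ∑ k ∈ Finset.range t, x k :=
      Finset.sum_nonneg fun i hi => hnn i (by have := Finset.mem_range.mp hi; omega)
    have hD0 : 0 ≤ ∑ i ∈ Finset.Ico t N, x i :=
      Finset.sum_nonneg fun i hi => hnn i (Finset.mem_Ico.mp hi).2
    have hC : ∑ i ∈ Finset.Ico t N, x i ^ 2 ≤ x (t - 1) * ∑ i ∈ Finset.Ico t N, x i := by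
      rw [Finset.mul_sum]
      apply Finset.sum_le_sum
      intro i hi
      obtain ⟨h1, h2⟩ := Finset.mem_Ico.mp hi
      have hle : x i ≤ x (t - 1) := hmono (t - 1) i (by omega) h2
      have hnn' := hnn i h2
      nlinarith
    have hB : x (t - 1) * ∑ k ∈ Finset.range t, x k ≤ ∑ k ∈ Finset.range t, x k ^ 2 := by
      rw [Finset.mul_sum]
      apply Finset.sum_le_sum
      intro k hk
      have hk' := Finset.mem_range.mp hk
      have h1 := hmono k (t - 1) (by omega) (by omega)
      have h2 := hnn k (by omega)
      nlinarith
    have key : (∑ k ∈ Finset.range t, x k) * ∑ i ∈ Finset.Ico t N, x i ^ 2 ≤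
        (∑ k ∈ Finset.range t, x k ^ 2) * ∑ i ∈ Finset.Ico t N, x i := by
      nlinarith [mul_le_mul_of_nonneg_right hB hD0, mul_le_mul_of_nonneg_left hC hA0]
    have hB1 : (∑ k ∈ Finset.range t, x k ^ 2) *
        (∑ k ∈ Finset.range t, x k + ∑ i ∈ Finset.Ico t N, x i) =
        ∑ k ∈ Finset.range t, x k ^ 2 := by rw [hsplit', mul_one]
    rw [← Finset.sum_div, le_div_iff₀ hSpos, ← hsplit]
    nlinarith [key, hB1]
  · rw [← Finset.sum_div, div_self (ne_of_gt hSpos), hsum]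
end

section
/- Let g be a nonnegative, not identically zero, function on a finite set with uniform measure. Then Ent(g²) ≥ (E g² / E g) · Ent(g); in particular Ent(g²) ≥ (E g)·Ent(g). -/
open Finset

private lemma gibbs' {x m : ℝ} (hx : 0 ≤ x) (hm : 0 < m) :
    x - m ≤ x * Real.log x - x * Real.log m := by
  rcases eq_or_lt_of_le hx with h | h
  · simp [← h]; linarith
  · have h1 : Real.log (m / x) ≤ m / x - 1 := Real.log_le_sub_one_of_pos (by positivity)
    have h2 : Real.log (m / x) = Real.log m - Real.log x := Real.log_div hm.ne' h.ne'
    have := mul_le_mul_of_nonneg_left (h2 ▸ h1) h.le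
    have hx' : x * (m / x - 1) = m - x := by field_simp
    nlinarith

/-- for a nonnegative, not identically zero function `g` on a finite set
with uniform measure, `Ent(g²) ≥ (E g²/E g) Ent(g)`; in particular
`Ent(g²) ≥ (E g) Ent(g)`. -/
theorem stmt17 {α : Type*} [Fintype α] [Nonempty α] (g : α → ℝ)
    (hg : ∀ a, 0 ≤ g a) (hne : ∃ a, g a ≠ 0) :
    ((∑ a, (g a) ^ 2) / (Fintype.card α : ℝ)) / ((∑ a, g a) / (Fintype.card α : ℝ)) *
        entFin g ≤ entFin (fun a => (g a) ^ 2) ∧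
      ((∑ a, g a) / (Fintype.card α : ℝ)) * entFin g ≤ entFin (fun a => (g a) ^ 2) := by
  classical
  have hlog2 : (0:ℝ) < Real.log 2 := Real.log_pos one_lt_two
  obtain ⟨a0, ha0⟩ := hne
  set N : ℝ := (Fintype.card α : ℝ) with hNdef
  have hN : 0 < N := by
    have := Fintype.card_pos (α := α); positivity
  set A : ℝ := ∑ x, g x with hAdef
  set B : ℝ := ∑ x, g x ^ 2 with hBdef
  set S1 : ℝ := ∑ x, g x * Real.log (g x) with hS1def
  set S2 : ℝ := ∑ x, g x ^ 2 * Real.log (g x) with hS2def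
  have ha : 0 < A := Finset.sum_pos' (fun i _ => hg i)
    ⟨a0, Finset.mem_univ _, lt_of_le_of_ne (hg a0) (Ne.symm ha0)⟩
  have hb : 0 < B := Finset.sum_pos' (fun i _ => sq_nonneg _)
    ⟨a0, Finset.mem_univ _, by positivity⟩
  -- Jensen for g
  have hJ1 : A * Real.log (A / N) ≤ S1 := by
    have hm : 0 < A / N := by positivity
    have h := Finset.sum_le_sum (s := Finset.univ)
      (fun i _ => gibbs' (hg i) hm)
    simp only [Finset.sum_sub_distrib, ← Finset.sum_mul, Finset.sum_const,
      Finset.card_univ, nsmul_eq_mul, ← hAdef, ← hS1def, ← hNdef] at h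
    have : N * (A / N) = A := by field_simp
    linarith
  -- Jensen for g² against weight g
  have hJ2 : B * Real.log (B / A) ≤ S2 := by
    have hm : 0 < B / A := by positivity
    have h := Finset.sum_le_sum (s := Finset.univ)
      (fun i _ => mul_le_mul_of_nonneg_left (gibbs' (hg i) hm) (hg i))
    have e1 : ∑ x, g x * (g x - B / A) = B - A * (B / A) := by
      rw [Finset.sum_congr rfl (fun x _ => by ring :
        ∀ x ∈ Finset.univ, g x * (g x - B / A) = g x ^ 2 - g x * (B / A))]
      rw [Finset.sum_sub_distrib, ← Finset.sum_mul]
    have e2 : ∑ x, g x * (g x * Real.log (g x) - g x * Real.log (B / A))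
        = S2 - B * Real.log (B / A) := by
      rw [Finset.sum_congr rfl (fun x _ => by ring :
        ∀ x ∈ Finset.univ, g x * (g x * Real.log (g x) - g x * Real.log (B / A))
          = g x ^ 2 * Real.log (g x) - g x ^ 2 * Real.log (B / A))]
      rw [Finset.sum_sub_distrib, ← Finset.sum_mul]
    rw [e1, e2] at h
    have : A * (B / A) = B := by field_simp
    linarith
  -- Chebyshev: B * S1 ≤ A * S2
  have hCheb : B * S1 ≤ A * S2 := by
    have hpt : ∀ x y : α, 0 ≤ g x * g y *
        ((g x - g y) * (Real.log (g x) - Real.log (g y))) := by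
      intro x y
      rcases eq_or_lt_of_le (hg x) with hx | hx
      · simp [← hx]
      rcases eq_or_lt_of_le (hg y) with hy | hy
      · simp [← hy]
      have : 0 ≤ (g x - g y) * (Real.log (g x) - Real.log (g y)) := by
        rcases le_total (g x) (g y) with h | h
        · have h1 := Real.log_le_log hx h
          nlinarith
        · exact mul_nonneg (by linarith)
            (by have := Real.log_le_log hy h; linarith)
      positivity
    have h : 0 ≤ ∑ x : α, ∑ y : α, g x * g y *
        ((g x - g y) * (Real.log (g x) - Real.log (g y))) :=
      Finset.sum_nonneg fun x _ => Finset.sum_nonneg fun y _ => hpt x y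
    have expand : ∑ x : α, ∑ y : α, g x * g y *
        ((g x - g y) * (Real.log (g x) - Real.log (g y)))
        = 2 * (A * S2 - B * S1) := by
      have inner : ∀ x : α, ∑ y : α, g x * g y *
          ((g x - g y) * (Real.log (g x) - Real.log (g y)))
          = g x ^ 2 * Real.log (g x) * A - g x ^ 2 * S1
            - g x * Real.log (g x) * B + g x * S2 := by
        intro x
        rw [Finset.sum_congr rfl (fun y _ => by ring :
          ∀ y ∈ Finset.univ, g x * g y * ((g x - g y) * (Real.log (g x) - Real.log (g y)))
            = g x ^ 2 * Real.log (g x) * g y - g x ^ 2 * (g y * Real.log (g y))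
              - g x * Real.log (g x) * g y ^ 2 + g x * (g y ^ 2 * Real.log (g y)))]
        rw [Finset.sum_add_distrib, Finset.sum_sub_distrib, Finset.sum_sub_distrib,
          ← Finset.mul_sum, ← Finset.mul_sum, ← Finset.mul_sum, ← Finset.mul_sum]
      rw [Finset.sum_congr rfl (fun x _ => inner x)]
      rw [Finset.sum_add_distrib, Finset.sum_sub_distrib, Finset.sum_sub_distrib,
        ← Finset.sum_mul, ← Finset.sum_mul, ← Finset.sum_mul, ← Finset.sum_mul]
      ring
    rw [expand] at h
    linarith
  -- Cauchy–Schwarz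
  have hCS : A ^ 2 ≤ N * B := by
    have h := sq_sum_le_card_mul_sum_sq (s := Finset.univ) (f := g)
    simpa [← hNdef, ← hAdef, ← hBdef] using h
  -- closed forms for entFin
  have Eg : entFin g = (S1 - A * Real.log (A / N)) / (N * Real.log 2) := by
    simp only [entFin, Real.logb, ← hNdef, ← hAdef]
    have : ∑ x, g x * (Real.log (g x) / Real.log 2) = S1 / Real.log 2 := by
      rw [hS1def, Finset.sum_div]
      exact Finset.sum_congr rfl fun x _ => by ring
    rw [this]
    field_simp
  have Eq2 : entFin (fun x => g x ^ 2)
      = (2 * S2 - B * Real.log (B / N)) / (N * Real.log 2) := by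
    simp only [entFin, Real.logb, ← hNdef, ← hBdef]
    have : ∑ x, g x ^ 2 * (Real.log (g x ^ 2) / Real.log 2) = 2 * S2 / Real.log 2 := by
      rw [hS2def, Finset.mul_sum, Finset.sum_div]
      refine Finset.sum_congr rfl fun x _ => ?_
      rw [Real.log_pow]
      push_cast
      ring
    rw [this]
    field_simp
  have hlogdiff : Real.log (B / N) - Real.log (A / N) = Real.log (B / A) := by
    rw [Real.log_div hb.ne' hN.ne', Real.log_div ha.ne' hN.ne',
      Real.log_div hb.ne' ha.ne']
    ring
  have hlB : Real.log (B / N) = Real.log (B / A) + Real.log (A / N) := by linarith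
  have key : B * (S1 - A * Real.log (A / N)) ≤ A * (2 * S2 - B * Real.log (B / N)) := by
    have h2 := mul_le_mul_of_nonneg_left hJ2 ha.le
    rw [hlB]
    nlinarith [hCheb, h2]
  have hEntg : 0 ≤ entFin g := by
    rw [Eg]
    apply div_nonneg (by linarith) (by positivity)
  have first : (B / N) / (A / N) * entFin g ≤ entFin (fun x => g x ^ 2) := by
    have hq : (B / N) / (A / N) = B / A := by
      field_simp
    rw [hq, Eg, Eq2, div_mul_div_comm, div_le_div_iff₀ (by positivity) (by positivity)]
    calc B * (S1 - A * Real.log (A / N)) * (N * Real.log 2)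
        ≤ A * (2 * S2 - B * Real.log (B / N)) * (N * Real.log 2) := by
          apply mul_le_mul_of_nonneg_right key (by positivity)
      _ = (2 * S2 - B * Real.log (B / N)) * (A * (N * Real.log 2)) := by ring
  refine ⟨first, ?_⟩
  refine le_trans ?_ first
  apply mul_le_mul_of_nonneg_right ?_ hEntg
  have hq2 : B / N / (A / N) = B / A := by field_simp
  rw [hq2, div_le_div_iff₀ hN ha]
  nlinarith [hCS]
end

section
/- Let g : {0,1}^n → ℝ be nonnegative with E_x g = 1. For x ∈ {0,1}^n let x^c denote its coordinatewise complement, and set g₀(x) = (g(x) + g(x^c))/2 (the 'even part') and g₁ = g − g₀ (the 'odd part'); note |g₁| ≤ g₀. Then Ent(g) = Ent(g₀) + E_x [ g₀(x)·( 1 − H₂( (1 − |g₁(x)|/g₀(x)) / 2 ) ) ], where the summand is interpreted as 0 at points x with g₀(x) = 0. -/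
open Finset

lemma key18 (a b : ℝ) (ha : 0 ≤ a) (hb : 0 ≤ b) :
    (a * Real.logb 2 a + b * Real.logb 2 b) / 2 =
      ((a + b) / 2) * Real.logb 2 ((a + b) / 2) +
        ((a + b) / 2) * (1 - H2 ((1 - |a - (a + b) / 2| / ((a + b) / 2)) / 2)) := by
  wlog hab : a ≤ b with H
  · have h := H b a hb ha (le_of_not_ge hab)
    have habs : |b - (b + a) / 2| = |a - (a + b) / 2| := by
      have : b - (b + a) / 2 = -(a - (a + b) / 2) := by ring
      rw [this, abs_neg]
    rw [habs, add_comm b a] at h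
    linarith [h]
  rcases eq_or_lt_of_le (by linarith : (0:ℝ) ≤ a + b) with h0 | hpos
  · have ha0 : a = 0 := by linarith
    have hb0 : b = 0 := by linarith
    simp [ha0, hb0, H2]
  · have hspos : 0 < (a + b) / 2 := by linarith
    have habs : |a - (a + b) / 2| = (a + b) / 2 - a := by
      rw [abs_of_nonpos (by linarith)]; ring
    have harg : (1 - |a - (a + b) / 2| / ((a + b) / 2)) / 2 = a / (a + b) := by
      rw [habs]; field_simp; ring
    rw [harg]
    have hs : Real.logb 2 ((a + b) / 2) = Real.logb 2 (a + b) - 1 := by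
      rw [Real.logb_div (by linarith) (by norm_num)]
      norm_num [Real.logb_self_eq_one]
    rcases eq_or_lt_of_le ha with ha0 | hapos
    · rw [← ha0]
      have hbpos : 0 < b := by linarith [ha0]
      have hb2 : Real.logb 2 (b / 2) = Real.logb 2 b - 1 := by
        rw [Real.logb_div (ne_of_gt hbpos) (by norm_num)]
        norm_num [Real.logb_self_eq_one]
      simp [H2, hb2]
      ring
    · have hbpos : 0 < b := lt_of_lt_of_le hapos hab
      have h1 : Real.logb 2 (a / (a + b)) = Real.logb 2 a - Real.logb 2 (a + b) :=
        Real.logb_div (ne_of_gt hapos) (by linarith)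
      have h2 : 1 - a / (a + b) = b / (a + b) := by field_simp; ring
      have h3 : Real.logb 2 (b / (a + b)) = Real.logb 2 b - Real.logb 2 (a + b) :=
        Real.logb_div (ne_of_gt hbpos) (by linarith)
      unfold H2
      rw [h1, h2, h3, hs]
      field_simp
      ring

/-- for nonnegative `g` with `E g = 1`, writing `g₀(x) = (g(x)+g(xᶜ))/2`
and `g₁ = g - g₀`, one has
`Ent(g) = Ent(g₀) + E_x g₀(x) (1 - H₂((1 - |g₁(x)|/g₀(x))/2))`
(the summand being 0 at points with `g₀(x) = 0`). -/
theorem stmt18 {n : ℕ} (g : Cube n → ℝ) (hg : ∀ x, 0 ≤ g x) (hEg : EX g = 1) :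
    Ent g =
      Ent (fun x => (g x + g (fun i => !x i)) / 2) +
        EX (fun x =>
          ((g x + g (fun i => !x i)) / 2) *
            (1 - H2 ((1 -
              |g x - (g x + g (fun i => !x i)) / 2| /
                ((g x + g (fun i => !x i)) / 2)) / 2))) := by
  classical
  have hcinv : Function.Involutive (fun (x : Cube n) (i : Fin n) => !x i) := by
    intro x; funext i; simp
  have hsum : ∀ F : Cube n → ℝ, ∑ x : Cube n, F (fun i => !x i) = ∑ x : Cube n, F x :=
    fun F => Fintype.sum_bijective _ hcinv.bijective _ _ (fun x => rfl)
  have hEg0 : EX (fun x => (g x + g (fun i => !x i)) / 2) = 1 := by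
    unfold EX at hEg ⊢
    have : ∑ x : Cube n, (g x + g (fun i => !x i)) / 2 = ∑ x : Cube n, g x := by
      rw [← Finset.sum_div, Finset.sum_add_distrib, hsum g]
      ring
    rw [this, hEg]
  have hmain : EX (fun x => g x * Real.logb 2 (g x)) =
      EX (fun x => ((g x + g (fun i => !x i)) / 2) *
            Real.logb 2 ((g x + g (fun i => !x i)) / 2)) +
      EX (fun x =>
          ((g x + g (fun i => !x i)) / 2) *
            (1 - H2 ((1 -
              |g x - (g x + g (fun i => !x i)) / 2| /
                ((g x + g (fun i => !x i)) / 2)) / 2))) := by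
    unfold EX
    rw [← add_div]
    congr 1
    rw [← Finset.sum_add_distrib]
    have hsym : ∑ x : Cube n, g x * Real.logb 2 (g x) =
        ∑ x : Cube n, (g x * Real.logb 2 (g x) +
          g (fun i => !x i) * Real.logb 2 (g (fun i => !x i))) / 2 := by
      rw [← Finset.sum_div, Finset.sum_add_distrib,
        hsum (fun x => g x * Real.logb 2 (g x))]
      ring
    rw [hsym]
    refine Finset.sum_congr rfl (fun x _ => ?_)
    exact key18 (g x) (g (fun i => !x i)) (hg x) (hg _)
  unfold Ent
  rw [hEg, hEg0]
  simp only [Real.logb_one, mul_zero, one_mul, sub_zero]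
  linarith [hmain]
end
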